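/- arXiv:0806.0279 — 4 statements merged into one kernel-verified Lean document; each statement's English description precedes it below -/
import Mathlib

section
/- For integers n ≥ 1 and 0 ≤ k ≤ n−1, there is a bijection between the set of ordered preference sets of length n with at least k flaws and the set S_{n,k} = {(x_1,…,x_{n−k}) ∈ ℕ^{n−k} : x_1 + x_2 + ⋯ + x_{n−k} = n + k} of solutions in nonnegative integers; in particular these two finite sets have the same cardinality. -/
/-- The first unoccupied parking space `j` with `p ≤ j ≤ n`, if any. -/
def firstFree (n : ℕ) (occ : Finset ℕ) (p : ℕ) : Option ℕ :=
  (List.range' p (n + 1 - p)).find? (fun j => decide (j ∉ occ))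

/-- Number of cars that fail to park, processing the preference list in order,
given the set of already occupied spaces. -/
def flawsFrom (n : ℕ) : List ℕ → Finset ℕ → ℕ
  | [], _ => 0
  | p :: rest, occ =>
    match firstFree n occ p with
    | none => flawsFrom n rest occ + 1
    | some j => flawsFrom n rest (insert j occ)

/-- The number of flaws (unparked cars) of a preference list of length `n`. -/
def flaws (n : ℕ) (a : List ℕ) : ℕ := flawsFrom n a ∅

/-- A preference set of length `n`: a list of length `n` with entries in `{1, …, n}`. -/
def IsPrefSet (n : ℕ) (a : List ℕ) : Prop :=
  a.length = n ∧ ∀ x ∈ a, 1 ≤ x ∧ x ≤ n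

/-- An ordered preference set of length `n`: a nondecreasing preference set. -/
def IsOrderedPrefSet (n : ℕ) (a : List ℕ) : Prop :=
  IsPrefSet n a ∧ a.Pairwise (· ≤ ·)

/-- `op_{n,≥k}`: number of ordered preference sets of length `n` with at least `k` flaws. -/
noncomputable def opGe (n k : ℕ) : ℕ :=
  {a : List ℕ | IsOrderedPrefSet n a ∧ k ≤ flaws n a}.ncard

/-- `op_{n,≤k}`: number of ordered preference sets of length `n` with at most `k` flaws. -/
noncomputable def opLe (n k : ℕ) : ℕ :=
  {a : List ℕ | IsOrderedPrefSet n a ∧ flaws n a ≤ k}.ncard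

/-- `op_{n,k}`: number of ordered preference sets of length `n` with exactly `k` flaws. -/
noncomputable def opEq (n k : ℕ) : ℕ :=
  {a : List ℕ | IsOrderedPrefSet n a ∧ flaws n a = k}.ncard

/-- `op_{n,≥k,≤l}`: at least `k` flaws, every entry at most `l`. -/
noncomputable def opGeLe (n k l : ℕ) : ℕ :=
  {a : List ℕ | IsOrderedPrefSet n a ∧ k ≤ flaws n a ∧ ∀ x ∈ a, x ≤ l}.ncard

/-- `op_{n,≥k,≤l}^m`: at least `k` flaws, every entry at most `l`, leading term `m`. -/
noncomputable def opGeLeLead (n k l m : ℕ) : ℕ :=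
  {a : List ℕ | IsOrderedPrefSet n a ∧ k ≤ flaws n a ∧ (∀ x ∈ a, x ≤ l) ∧
    a.head? = some m}.ncard

/-- `op_{n,k,≤l}^m`: exactly `k` flaws, every entry at most `l`, leading term `m`. -/
noncomputable def opEqLeLead (n k l m : ℕ) : ℕ :=
  {a : List ℕ | IsOrderedPrefSet n a ∧ flaws n a = k ∧ (∀ x ∈ a, x ≤ l) ∧
    a.head? = some m}.ncard

/-- `op_{n,k}^m`: exactly `k` flaws, leading term `m`. -/
noncomputable def opLead (n k m : ℕ) : ℕ :=
  {a : List ℕ | IsOrderedPrefSet n a ∧ flaws n a = k ∧ a.head? = some m}.ncard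

/-- `op_{n,k,=l}^m`: exactly `k` flaws, maximal entry exactly `l`, leading term `m`. -/
noncomputable def opMaxLead (n k l m : ℕ) : ℕ :=
  {a : List ℕ | IsOrderedPrefSet n a ∧ flaws n a = k ∧ (∀ x ∈ a, x ≤ l) ∧ l ∈ a ∧
    a.head? = some m}.ncard

/-- Binomial coefficient `C(a, b)` with an integer lower index, which is `0`
when `b < 0` (the standard convention). -/
def chooseInt (a : ℕ) (b : ℤ) : ℕ := if 0 ≤ b then a.choose b.toNat else 0

/-- Pure simulation of the parking process on a sorted list: `r` is the least
free space among the relevant (high) spaces. -/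
def pureF (n : ℕ) : List ℕ → ℕ → ℕ
  | [], _ => 0
  | p :: rest, r => if max p r ≤ n then pureF n rest (max p r + 1) else pureF n rest r + 1

/-- Unclamped state value. -/
def uVal : List ℕ → ℕ → ℕ → ℕ
  | _, r, 0 => r
  | [], r, m + 1 => r + m + 1
  | p :: rest, r, m + 1 => uVal rest (max p r + 1) m

lemma firstFree_eq (n : ℕ) (occ : Finset ℕ) (r : ℕ) :
    ∀ p, (∀ j, p ≤ j → j ≤ n → (j ∈ occ ↔ j < r)) →
    firstFree n occ p = if max p r ≤ n then some (max p r) else none := by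
  suffices H : ∀ fuel p, n + 1 - p = fuel →
      (∀ j, p ≤ j → j ≤ n → (j ∈ occ ↔ j < r)) →
      firstFree n occ p = if max p r ≤ n then some (max p r) else none by
    intro p h; exact H _ p rfl h
  intro fuel
  induction fuel with
  | zero =>
    intro p hp _
    have hpn : n < p := by omega
    rw [firstFree, show n + 1 - p = 0 from hp]
    have : ¬ max p r ≤ n := fun hc => absurd (le_trans (Nat.le_max_left p r) hc) (by omega)
    simp [this]
  | succ fuel ih =>
    intro p hp h
    have hpn : p ≤ n := by omega
    rw [firstFree, show n + 1 - p = fuel + 1 from hp, List.range'_succ]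
    by_cases hocc : p ∈ occ
    · have hpr : p < r := (h p le_rfl hpn).mp hocc
      rw [List.find?_cons_of_neg (by simp [hocc])]
      have heq : (List.range' (p+1) fuel).find? (fun j => decide (j ∉ occ)) = firstFree n occ (p+1) := by
        rw [firstFree, show n + 1 - (p+1) = fuel from by omega]
      rw [heq, ih (p+1) (by omega) (fun j hj hjn => h j (by omega) hjn)]
      have : max (p+1) r = max p r := by
        rcases Nat.le_total p r with h'|h'
        · rw [Nat.max_eq_right h', Nat.max_eq_right (by omega)]
        · omega
      rw [this]
    · have hrp : r ≤ p := by
        by_contra hc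
        exact hocc ((h p le_rfl hpn).mpr (by omega))
      rw [List.find?_cons_of_pos (by simp [hocc])]
      have : max p r = p := by omega
      rw [this, if_pos hpn]

lemma flawsFrom_eq_pureF (n : ℕ) :
    ∀ (l : List ℕ), l.Pairwise (· ≤ ·) →
    ∀ (occ : Finset ℕ) (r b : ℕ), (∀ p ∈ l, b ≤ p) →
    (∀ j, b ≤ j → j ≤ n → (j ∈ occ ↔ j < r)) →
    flawsFrom n l occ = pureF n l r := by
  intro l
  induction l with
  | nil => intro _ occ r b _ _; rfl
  | cons p rest ih =>
    intro hs occ r b hb h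
    rw [List.pairwise_cons] at hs
    have hbp : b ≤ p := hb p (List.mem_cons_self)
    have hff := firstFree_eq n occ r p (fun j hj hjn => h j (le_trans hbp hj) hjn)
    by_cases hmax : max p r ≤ n
    · rw [if_pos hmax] at hff
      rw [flawsFrom, hff]
      show flawsFrom n rest (insert (max p r) occ) = pureF n (p :: rest) r
      rw [pureF, if_pos hmax]
      apply ih hs.2 _ _ p hs.1
      intro j hj hjn
      simp only [Finset.mem_insert]
      constructor
      · rintro (rfl | hjo)
        · omega
        · have := (h j (le_trans hbp hj) hjn).mp hjo; omega
      · intro hlt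
        rcases Nat.lt_succ_iff_lt_or_eq.mp hlt with hlt' | rfl
        · right
          refine (h j (le_trans hbp hj) hjn).mpr ?_
          omega
        · left; rfl
    · rw [if_neg hmax] at hff
      rw [flawsFrom, hff]
      show flawsFrom n rest occ + 1 = pureF n (p :: rest) r
      rw [pureF, if_neg hmax]
      congr 1
      exact ih hs.2 _ _ p hs.1 (fun j hj hjn => h j (le_trans hbp hj) hjn)

lemma flaws_eq_pureF (n : ℕ) (a : List ℕ) (ha : a.Pairwise (· ≤ ·)) :
    flaws n a = pureF n a 0 := by
  apply flawsFrom_eq_pureF n a ha ∅ 0 0 (fun _ _ => Nat.zero_le _)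
  simp

lemma le_uVal : ∀ (l : List ℕ) (r m : ℕ), r ≤ uVal l r m := by
  intro l
  induction l with
  | nil => intro r m; cases m <;> simp [uVal] <;> omega
  | cons p rest ih =>
    intro r m
    cases m with
    | zero => simp [uVal]
    | succ m => exact le_trans (by omega) (ih (max p r + 1) m)

lemma pureF_le (n : ℕ) : ∀ (l : List ℕ) (r : ℕ), pureF n l r ≤ l.length := by
  intro l
  induction l with
  | nil => intro r; simp [pureF]
  | cons p rest ih =>
    intro r
    rw [pureF]
    split
    · exact le_trans (ih _) (by simp)
    · simpa using ih r

lemma pureF_of_gt (n : ℕ) : ∀ (l : List ℕ), (∀ p ∈ l, p ≤ n) → ∀ (r : ℕ), n < r →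
    pureF n l r = l.length := by
  intro l
  induction l with
  | nil => intro _ r _; rfl
  | cons p rest ih =>
    intro hl r hr
    have hp : p ≤ n := hl p (List.mem_cons_self)
    rw [pureF, if_neg (by omega)]
    rw [ih (fun q hq => hl q (List.mem_cons_of_mem _ hq)) r hr]
    simp

lemma pureF_ge_iff (n : ℕ) : ∀ (l : List ℕ), (∀ p ∈ l, p ≤ n) → ∀ (r k : ℕ), 1 ≤ k →
    (k ≤ pureF n l r ↔ k ≤ l.length ∧ n < uVal l r (l.length - k)) := by
  intro l
  induction l with
  | nil =>
    intro _ r k hk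
    simp [pureF]
    omega
  | cons p rest ih =>
    intro hl r k hk
    have hp : p ≤ n := hl p (List.mem_cons_self)
    have hrest : ∀ q ∈ rest, q ≤ n := fun q hq => hl q (List.mem_cons_of_mem _ hq)
    rw [pureF]
    by_cases hmax : max p r ≤ n
    · rw [if_pos hmax]
      rcases Nat.lt_or_ge rest.length k with hlen | hlen
      · -- k > rest.length
        constructor
        · intro hF
          exact absurd (le_trans hF (pureF_le n rest _)) (by omega)
        · rintro ⟨hkl, hu⟩
          have hk1 : k = rest.length + 1 := by simp at hkl; omega
          have : (p :: rest).length - k = 0 := by simp; omega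
          rw [this] at hu
          simp [uVal] at hu
          omega
      · -- k ≤ rest.length
        rw [ih hrest _ k hk]
        have h1 : (p :: rest).length - k = (rest.length - k) + 1 := by simp; omega
        rw [h1]
        simp only [uVal]
        constructor
        · rintro ⟨h2, h3⟩; exact ⟨by simp; omega, h3⟩
        · rintro ⟨h2, h3⟩; exact ⟨hlen, h3⟩
    · rw [if_neg hmax]
      have hr : n < r := by omega
      rw [pureF_of_gt n rest hrest r hr]
      have hu : n < uVal (p :: rest) r ((p :: rest).length - k) :=
        lt_of_lt_of_le hr (le_uVal _ _ _)
      simp only [List.length_cons]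
      constructor
      · intro h2; exact ⟨by omega, hu⟩
      · rintro ⟨h2, _⟩; omega

lemma uVal_gt_iff (n : ℕ) : ∀ (l : List ℕ) (r m : ℕ), m ≤ l.length →
    (n < uVal l r m ↔ n < r + m ∨ ∃ i < m, n + i < l.getD i 0 + m) := by
  intro l
  induction l with
  | nil =>
    intro r m hm
    simp at hm
    subst hm
    simp [uVal]
  | cons p rest ih =>
    intro r m hm
    cases m with
    | zero => simp [uVal]
    | succ m =>
      simp only [uVal]
      rw [ih (max p r + 1) m (by simp at hm; omega)]
      constructor
      · rintro (h1 | ⟨i, hi, h2⟩)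
        · rcases Nat.le_total p r with h | h
          · rw [Nat.max_eq_right h] at h1; left; omega
          · rw [Nat.max_eq_left h] at h1
            right; exact ⟨0, by omega, by simp; omega⟩
        · right
          refine ⟨i + 1, by omega, ?_⟩
          rw [List.getD_cons_succ]
          omega
      · rintro (h1 | ⟨i, hi, h2⟩)
        · left; have : r ≤ max p r := Nat.le_max_right p r; omega
        · cases i with
          | zero =>
            rw [List.getD_cons_zero] at h2
            left
            have : p ≤ max p r := Nat.le_max_left p r
            omega
          | succ i =>
            right
            refine ⟨i, by omega, ?_⟩
            rw [List.getD_cons_succ] at h2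
            omega

/-- The key criterion: a sorted preference set has at least `k` flaws iff
some entry `a[i]` with `i < n - k` satisfies `a[i] ≥ i + k + 1`. -/
lemma flaws_ge_iff {n k : ℕ} (hn : 1 ≤ n) (hk : k ≤ n - 1) {a : List ℕ}
    (ha : IsOrderedPrefSet n a) :
    k ≤ flaws n a ↔ ∃ i < n - k, i + k + 1 ≤ a.getD i 0 := by
  obtain ⟨⟨hlen, hmem⟩, hsort⟩ := ha
  rcases Nat.eq_zero_or_pos k with rfl | hk1
  · simp only [Nat.le_zero, Nat.zero_le, true_iff]
    refine ⟨0, by omega, ?_⟩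
    have h0 : 0 < a.length := by omega
    have := hmem (a.getD 0 0) (by
      rw [List.getD_eq_getElem _ _ h0]
      exact List.getElem_mem _)
    omega
  · rw [flaws_eq_pureF n a hsort,
      pureF_ge_iff n a (fun p hp => (hmem p hp).2) 0 k hk1, hlen,
      uVal_gt_iff n a 0 (n - k) (by omega)]
    have hnk : ¬ (n < 0 + (n - k)) := by omega
    simp only [hnk, false_or]
    constructor
    · rintro ⟨_, i, hi, h2⟩; exact ⟨i, hi, by omega⟩
    · rintro ⟨i, hi, h2⟩; exact ⟨by omega, i, hi, by omega⟩

section Part2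

/-- Encode a list by adding the index to each entry. -/
def encL (a : List ℕ) : List ℕ := List.zipWith (· + ·) a (List.range a.length)

/-- Decode: subtract the index. -/
def decL (d : List ℕ) : List ℕ := List.zipWith (· - ·) d (List.range d.length)

@[simp] lemma encL_length (a : List ℕ) : (encL a).length = a.length := by
  simp [encL]

@[simp] lemma decL_length (d : List ℕ) : (decL d).length = d.length := by
  simp [decL]

lemma encL_getElem (a : List ℕ) (i : ℕ) (hi : i < (encL a).length) :
    (encL a)[i] = a[i]'(by simpa using hi) + i := by
  simp [encL]

lemma decL_getElem (d : List ℕ) (i : ℕ) (hi : i < (decL d).length) :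
    (decL d)[i] = d[i]'(by simpa using hi) - i := by
  simp [decL]

lemma decL_encL (a : List ℕ) : decL (encL a) = a := by
  apply List.ext_getElem (by simp)
  intro i h1 h2
  simp [decL, encL]

lemma encL_decL (d : List ℕ) (hd : ∀ i (hi : i < d.length), i ≤ d[i]) :
    encL (decL d) = d := by
  apply List.ext_getElem (by simp)
  intro i h1 h2
  simp only [encL, decL, List.getElem_zipWith, List.getElem_range, List.length_zipWith,
    List.length_range]
  have := hd i h2
  omega

lemma encL_sorted {a : List ℕ} (ha : a.Pairwise (· ≤ ·)) : (encL a).Pairwise (· < ·) := by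
  rw [List.pairwise_iff_getElem] at *
  intro i j hi hj hij
  rw [encL_getElem _ _ hi, encL_getElem _ _ hj]
  have := ha i j (by simpa using hi) (by simpa using hj) hij
  omega

/-- Gap lemma for strictly sorted lists of naturals. -/
lemma strict_gap {d : List ℕ} (hd : d.Pairwise (· < ·)) :
    ∀ i j (_ : i ≤ j) (hj : j < d.length), d[i]'(by omega) + (j - i) ≤ d[j] := by
  rw [List.pairwise_iff_getElem] at hd
  intro i j hij hj
  induction j with
  | zero =>
    have : i = 0 := by omega
    subst this
    simp
  | succ j ih =>
    rcases Nat.eq_or_lt_of_le hij with rfl | hlt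
    · simp
    · have h1 := ih (by omega) (by omega)
      have h2 := hd j (j + 1) (by omega) (by omega) (by omega)
      omega

lemma strict_ge_index {d : List ℕ} (hd : d.Pairwise (· < ·))
    (h1 : ∀ x ∈ d, 1 ≤ x) : ∀ i (hi : i < d.length), i + 1 ≤ d[i] := by
  intro i hi
  have := strict_gap hd 0 i (by omega) hi
  have h0 : 1 ≤ d[0]'(by omega) := h1 _ (List.getElem_mem _)
  omega

lemma decL_sorted {d : List ℕ} (hd : d.Pairwise (· < ·)) (h1 : ∀ x ∈ d, 1 ≤ x) :
    (decL d).Pairwise (· ≤ ·) := by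
  rw [List.pairwise_iff_getElem]
  intro i j hi hj hij
  rw [decL_getElem _ _ hi, decL_getElem _ _ hj]
  have := strict_gap hd i j (by omega) (by simpa using hj)
  omega

/-- count of elements `≤ t` is at most `i` if the `i`-th element exceeds `t`. -/
lemma countP_le_of_lt {t : ℕ} : ∀ {d : List ℕ}, d.Pairwise (· ≤ ·) →
    ∀ i (_ : i < d.length), t < d[i] → d.countP (fun x => decide (x ≤ t)) ≤ i := by
  intro d
  induction d with
  | nil => intro _ i hi; simp at hi
  | cons x r ih =>
    intro hs i hi hx
    rw [List.pairwise_cons] at hs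
    rw [List.countP_cons]
    cases i with
    | zero =>
      simp only [List.getElem_cons_zero] at hx
      have : r.countP (fun x => decide (x ≤ t)) = 0 := by
        rw [List.countP_eq_zero]
        intro y hy
        have := hs.1 y hy
        simp; omega
      rw [this]
      simp; omega
    | succ i =>
      have := ih hs.2 i (by simpa using hi) (by simpa using hx)
      simp only [decide_eq_true_eq]
      split <;> omega

lemma lt_countP_of_le {t : ℕ} : ∀ {d : List ℕ}, d.Pairwise (· ≤ ·) →
    ∀ i (_ : i < d.length), d[i] ≤ t → i < d.countP (fun x => decide (x ≤ t)) := by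
  intro d
  induction d with
  | nil => intro _ i hi; simp at hi
  | cons x r ih =>
    intro hs i hi hx
    rw [List.pairwise_cons] at hs
    rw [List.countP_cons]
    cases i with
    | zero =>
      simp only [List.getElem_cons_zero] at hx
      simp [hx]
    | succ i =>
      have := ih hs.2 i (by simpa using hi) (by simpa using hx)
      have hxr : x ≤ r[i]'(by simpa using hi) := hs.1 _ (List.getElem_mem _)
      have hx' : r[i]'(by simpa using hi) ≤ t := by simpa using hx
      simp only [decide_eq_true_eq]
      split <;> omega

end Part2

section Part3

/-- Number of elements of `S` that are `≤ t`. -/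
def cntF (S : Finset ℕ) (t : ℕ) : ℕ := (S.filter (· ≤ t)).card

lemma cntF_le_card (S : Finset ℕ) (t : ℕ) : cntF S t ≤ S.card :=
  Finset.card_filter_le _ _

lemma filter_le_subset_Icc {S : Finset ℕ} (hS : ∀ x ∈ S, 1 ≤ x) (t : ℕ) :
    S.filter (· ≤ t) ⊆ Finset.Icc 1 t := by
  intro x hx
  rw [Finset.mem_filter] at hx
  rw [Finset.mem_Icc]
  exact ⟨hS x hx.1, hx.2⟩

lemma cntF_le {S : Finset ℕ} (hS : ∀ x ∈ S, 1 ≤ x) (t : ℕ) : cntF S t ≤ t := by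
  have h := Finset.card_le_card (filter_le_subset_Icc hS t)
  rwa [Nat.card_Icc, Nat.add_sub_cancel] at h

lemma cntF_mono (S : Finset ℕ) (t : ℕ) : cntF S t ≤ cntF S (t + 1) := by
  apply Finset.card_le_card
  intro x hx
  rw [Finset.mem_filter] at *
  exact ⟨hx.1, by omega⟩

lemma cntF_succ_le (S : Finset ℕ) (t : ℕ) : cntF S (t + 1) ≤ cntF S t + 1 := by
  have hsub : S.filter (· ≤ t + 1) ⊆ insert (t + 1) (S.filter (· ≤ t)) := by
    intro x hx
    rw [Finset.mem_filter] at hx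
    rw [Finset.mem_insert, Finset.mem_filter]
    rcases Nat.lt_or_ge x (t + 1) with h | h
    · right; exact ⟨hx.1, by omega⟩
    · left; omega
  exact le_trans (Finset.card_le_card hsub) (Finset.card_insert_le _ _)

lemma cntF_zero {S : Finset ℕ} (hS : ∀ x ∈ S, 1 ≤ x) : cntF S 0 = 0 := by
  rw [cntF, Finset.card_eq_zero, Finset.filter_eq_empty_iff]
  intro x hx
  have := hS x hx
  omega

lemma cntF_top {S : Finset ℕ} {m : ℕ} (hSm : S ⊆ Finset.Icc 1 m) : cntF S m = S.card := by
  rw [cntF, Finset.filter_true_of_mem]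
  intro x hx
  have := hSm hx
  rw [Finset.mem_Icc] at this
  exact this.2

/-- count of elements of `S` that are `> t`. -/
lemma cntF_compl (S : Finset ℕ) (t : ℕ) :
    (S.filter (fun x => t < x)).card = S.card - cntF S t := by
  have h := Finset.card_filter_add_card_filter_not (s := S) (p := (· ≤ t))
  have heq : S.filter (fun x => ¬ x ≤ t) = S.filter (fun x => t < x) := by
    apply Finset.filter_congr
    intro x _
    exact not_le
  rw [heq] at h
  rw [cntF] at *
  omega

/-- The reflection of `S` at time `t`: complement below `t`, unchanged above. -/
def reflF (t : ℕ) (S : Finset ℕ) : Finset ℕ :=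
  ((Finset.Icc 1 t) \ S) ∪ S.filter (fun x => t < x)

lemma mem_reflF {t : ℕ} {S : Finset ℕ} {x : ℕ} :
    x ∈ reflF t S ↔ ((1 ≤ x ∧ x ≤ t ∧ x ∉ S) ∨ (x ∈ S ∧ t < x)) := by
  simp [reflF, Finset.mem_Icc, and_assoc]

lemma reflF_one {t : ℕ} {S : Finset ℕ} (hS : ∀ x ∈ S, 1 ≤ x) :
    ∀ x ∈ reflF t S, 1 ≤ x := by
  intro x hx
  rw [mem_reflF] at hx
  rcases hx with h | h
  · exact h.1
  · exact hS x h.1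

lemma reflF_subset_Icc {t m : ℕ} {S : Finset ℕ} (hSm : S ⊆ Finset.Icc 1 m) (htm : t ≤ m) :
    reflF t S ⊆ Finset.Icc 1 m := by
  intro x hx
  rw [mem_reflF] at hx
  rw [Finset.mem_Icc]
  rcases hx with h | h
  · exact ⟨h.1, by omega⟩
  · have := hSm h.1; rw [Finset.mem_Icc] at this; exact this

lemma card_Icc_sdiff {t : ℕ} {S : Finset ℕ} (hS : ∀ x ∈ S, 1 ≤ x) :
    (Finset.Icc 1 t \ S).card = t - cntF S t := by
  have heq : Finset.Icc 1 t \ S = Finset.Icc 1 t \ (S.filter (· ≤ t)) := by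
    ext x
    simp only [Finset.mem_sdiff, Finset.mem_Icc, Finset.mem_filter]
    constructor
    · rintro ⟨h1, h2⟩; exact ⟨h1, fun hc => h2 hc.1⟩
    · rintro ⟨h1, h2⟩; exact ⟨h1, fun hc => h2 ⟨hc, h1.2⟩⟩
  rw [heq, Finset.card_sdiff_of_subset (filter_le_subset_Icc hS t), Nat.card_Icc, Nat.add_sub_cancel, cntF]

lemma cntF_reflF {t t' : ℕ} {S : Finset ℕ} (hS : ∀ x ∈ S, 1 ≤ x) (h : t' ≤ t) :
    cntF (reflF t S) t' = t' - cntF S t' := by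
  have heq : (reflF t S).filter (· ≤ t') = Finset.Icc 1 t' \ S := by
    ext x
    simp only [Finset.mem_filter, mem_reflF, Finset.mem_sdiff, Finset.mem_Icc]
    constructor
    · rintro ⟨h1 | h1, h2⟩
      · exact ⟨⟨h1.1, h2⟩, h1.2.2⟩
      · omega
    · rintro ⟨⟨h1, h2⟩, h3⟩
      exact ⟨Or.inl ⟨h1, by omega, h3⟩, h2⟩
  rw [cntF, heq, card_Icc_sdiff hS]

lemma card_reflF {t : ℕ} {S : Finset ℕ} (hS : ∀ x ∈ S, 1 ≤ x) :
    (reflF t S).card = (t - cntF S t) + (S.card - cntF S t) := by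
  rw [reflF, Finset.card_union_of_disjoint, card_Icc_sdiff hS, cntF_compl]
  rw [Finset.disjoint_left]
  intro x hx hx'
  rw [Finset.mem_sdiff, Finset.mem_Icc] at hx
  rw [Finset.mem_filter] at hx'
  omega

lemma reflF_reflF {t : ℕ} {S : Finset ℕ} (hS : ∀ x ∈ S, 1 ≤ x) :
    reflF t (reflF t S) = S := by
  ext x
  have hh := hS x
  simp only [mem_reflF]
  by_cases hx : x ∈ S <;> by_cases hxt : x ≤ t <;> simp_all <;> omega

/-- Discrete intermediate value theorem (only needs upward steps bounded by 1). -/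
lemma int_ivt (f : ℕ → ℤ) (hstep : ∀ t, f (t + 1) ≤ f t + 1) {a b : ℕ} (hab : a ≤ b)
    (ha : f a ≤ 0) (hb : 0 ≤ f b) : ∃ t, a ≤ t ∧ t ≤ b ∧ f t = 0 := by
  have hex : ∃ c, 0 ≤ f (a + c) := ⟨b - a, by rwa [show a + (b - a) = b from by omega]⟩
  have hc : 0 ≤ f (a + Nat.find hex) := Nat.find_spec hex
  have hcb : Nat.find hex ≤ b - a :=
    Nat.find_min' hex (by rwa [show a + (b - a) = b from by omega])
  rcases Nat.eq_zero_or_pos (Nat.find hex) with h0 | h0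
  · rw [h0] at hc
    simp only [Nat.add_zero] at hc
    exact ⟨a, le_rfl, hab, by omega⟩
  · have hprev : ¬ 0 ≤ f (a + (Nat.find hex - 1)) := Nat.find_min hex (by omega)
    have hs := hstep (a + (Nat.find hex - 1))
    rw [show a + (Nat.find hex - 1) + 1 = a + Nat.find hex from by omega] at hs
    exact ⟨a + Nat.find hex, by omega, by omega, by omega⟩

end Part3
section Part4

open Classical in
/-- `n`-subsets of `[1, 2n-1]` whose star/bar path touches level `-k`. -/
noncomputable def setA (n k : ℕ) : Finset (Finset ℕ) :=
  (Finset.powersetCard n (Finset.Icc 1 (2*n-1))).filter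
    (fun S => ∃ t ≤ 2*n-1, t = 2 * cntF S t + k)

/-- `(n+k)`-subsets of `[1, 2n-1]`. -/
def setB (n k : ℕ) : Finset (Finset ℕ) :=
  Finset.powersetCard (n+k) (Finset.Icc 1 (2*n-1))

open Classical in
noncomputable def phiF (k : ℕ) (S : Finset ℕ) : Finset ℕ :=
  if h : ∃ t, t = 2 * cntF S t + k then reflF (Nat.find h) S else S

open Classical in
noncomputable def psiF (k : ℕ) (T : Finset ℕ) : Finset ℕ :=
  if h : ∃ t, t + k = 2 * cntF T t then reflF (Nat.find h) T else T

lemma mem_setA {n k : ℕ} {S : Finset ℕ} :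
    S ∈ setA n k ↔ (S ⊆ Finset.Icc 1 (2*n-1) ∧ S.card = n) ∧
      ∃ t ≤ 2*n-1, t = 2 * cntF S t + k := by
  simp [setA, Finset.mem_filter, Finset.mem_powersetCard]

lemma mem_setB {n k : ℕ} {T : Finset ℕ} :
    T ∈ setB n k ↔ T ⊆ Finset.Icc 1 (2*n-1) ∧ T.card = n + k := by
  simp [setB, Finset.mem_powersetCard]

lemma phiF_spec {n k : ℕ} {S : Finset ℕ} (hsub : S ⊆ Finset.Icc 1 (2*n-1))
    (hcard : S.card = n) (htouch : ∃ t ≤ 2*n-1, t = 2 * cntF S t + k) :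
    phiF k S ∈ setB n k ∧ psiF k (phiF k S) = S := by
  classical
  have hone : ∀ x ∈ S, 1 ≤ x := fun x hx => (Finset.mem_Icc.mp (hsub hx)).1
  obtain ⟨tw, htw, htw2⟩ := htouch
  have hex : ∃ t, t = 2 * cntF S t + k := ⟨tw, htw2⟩
  have hspec : Nat.find hex = 2 * cntF S (Nat.find hex) + k := Nat.find_spec hex
  set t₀ := Nat.find hex with ht₀def
  have ht₀m : t₀ ≤ 2*n-1 := Nat.find_min' hex htw2 |>.trans htw
  have hphi : phiF k S = reflF t₀ S := by rw [phiF, dif_pos hex]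
  have hc0 : cntF S t₀ ≤ t₀ := cntF_le hone t₀
  have hcn : cntF S t₀ ≤ n := hcard ▸ cntF_le_card S t₀
  have honeT : ∀ x ∈ reflF t₀ S, 1 ≤ x := reflF_one hone
  constructor
  · rw [mem_setB, hphi]
    refine ⟨reflF_subset_Icc hsub ht₀m, ?_⟩
    rw [card_reflF hone, hcard]
    omega
  · rw [hphi]
    have hexψ : ∃ t, t + k = 2 * cntF (reflF t₀ S) t := by
      refine ⟨t₀, ?_⟩
      rw [cntF_reflF hone le_rfl]
      omega
    rw [psiF, dif_pos hexψ]
    have ht₁spec : Nat.find hexψ + k = 2 * cntF (reflF t₀ S) (Nat.find hexψ) :=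
      Nat.find_spec hexψ
    have ht₁le : Nat.find hexψ ≤ t₀ := Nat.find_min' hexψ (by
      rw [cntF_reflF hone le_rfl]; omega)
    have ht₁eq : Nat.find hexψ = t₀ := by
      rcases Nat.eq_or_lt_of_le ht₁le with h | h
      · exact h
      · exfalso
        have hr := cntF_reflF hone (le_of_lt h) (S := S)
        rw [hr] at ht₁spec
        have hcc : cntF S (Nat.find hexψ) ≤ Nat.find hexψ := cntF_le hone _
        have : Nat.find hexψ = 2 * cntF S (Nat.find hexψ) + k := by omega
        exact absurd this (Nat.find_min hex h)
    rw [ht₁eq]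
    exact reflF_reflF hone

lemma psiF_spec {n k : ℕ} (hn : 1 ≤ n) {T : Finset ℕ}
    (hsub : T ⊆ Finset.Icc 1 (2*n-1)) (hcard : T.card = n + k) :
    psiF k T ∈ setA n k ∧ phiF k (psiF k T) = T := by
  classical
  have hone : ∀ x ∈ T, 1 ≤ x := fun x hx => (Finset.mem_Icc.mp (hsub hx)).1
  -- existence of a hitting time via the discrete IVT
  have hex : ∃ t, t + k = 2 * cntF T t ∧ t ≤ 2*n-1 := by
    have hivt := int_ivt (fun t => 2 * (cntF T t : ℤ) - t - k)
      (fun t => by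
        have := cntF_succ_le T t
        push_cast
        omega)
      (Nat.zero_le (2*n-1))
      (by simp [cntF_zero hone])
      (by
        rw [cntF_top hsub, hcard]
        push_cast
        omega)
    obtain ⟨t, _, htm, ht0⟩ := hivt
    refine ⟨t, ?_, htm⟩
    have : 2 * (cntF T t : ℤ) - t - k = 0 := ht0
    omega
  obtain ⟨ts, hts, htsm⟩ := hex
  have hexψ : ∃ t, t + k = 2 * cntF T t := ⟨ts, hts⟩
  have hspec : Nat.find hexψ + k = 2 * cntF T (Nat.find hexψ) := Nat.find_spec hexψ
  set t₁ := Nat.find hexψ with ht₁def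
  have ht₁m : t₁ ≤ 2*n-1 := (Nat.find_min' hexψ hts).trans htsm
  have hpsi : psiF k T = reflF t₁ T := by rw [psiF, dif_pos hexψ]
  have hc0 : cntF T t₁ ≤ t₁ := cntF_le hone t₁
  have hcn : cntF T t₁ ≤ n + k := hcard ▸ cntF_le_card T t₁
  have honeT : ∀ x ∈ reflF t₁ T, 1 ≤ x := reflF_one hone
  have hcnt_refl : ∀ t ≤ t₁, cntF (reflF t₁ T) t = t - cntF T t :=
    fun t ht => cntF_reflF hone ht
  constructor
  · rw [mem_setA, hpsi]
    refine ⟨⟨reflF_subset_Icc hsub ht₁m, ?_⟩, ⟨t₁, ht₁m, ?_⟩⟩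
    · rw [card_reflF hone, hcard]
      omega
    · rw [hcnt_refl t₁ le_rfl]
      omega
  · rw [hpsi]
    have hexφ : ∃ t, t = 2 * cntF (reflF t₁ T) t + k := by
      refine ⟨t₁, ?_⟩
      rw [hcnt_refl t₁ le_rfl]
      omega
    rw [phiF, dif_pos hexφ]
    have ht₂spec : Nat.find hexφ = 2 * cntF (reflF t₁ T) (Nat.find hexφ) + k :=
      Nat.find_spec hexφ
    have ht₂le : Nat.find hexφ ≤ t₁ := Nat.find_min' hexφ (by
      rw [hcnt_refl t₁ le_rfl]; omega)
    have ht₂eq : Nat.find hexφ = t₁ := by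
      rcases Nat.eq_or_lt_of_le ht₂le with h | h
      · exact h
      · exfalso
        rw [hcnt_refl _ (le_of_lt h)] at ht₂spec
        have hcc : cntF T (Nat.find hexφ) ≤ Nat.find hexφ := cntF_le hone _
        have : Nat.find hexφ + k = 2 * cntF T (Nat.find hexφ) := by omega
        exact absurd this (Nat.find_min hexψ h)
    rw [ht₂eq]
    exact reflF_reflF hone

lemma card_setA_eq_setB {n k : ℕ} (hn : 1 ≤ n) :
    (setA n k).card = (setB n k).card := by
  apply Finset.card_bij' (fun S _ => phiF k S) (fun T _ => psiF k T)
  · intro S hS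
    rw [mem_setA] at hS
    exact (phiF_spec hS.1.1 hS.1.2 hS.2).1
  · intro T hT
    rw [mem_setB] at hT
    exact (psiF_spec hn hT.1 hT.2).1
  · intro S hS
    rw [mem_setA] at hS
    exact (phiF_spec hS.1.1 hS.1.2 hS.2).2
  · intro T hT
    rw [mem_setB] at hT
    exact (psiF_spec hn hT.1 hT.2).2

lemma card_setB {n k : ℕ} : (setB n k).card = (2*n-1).choose (n+k) := by
  rw [setB, Finset.card_powersetCard, Nat.card_Icc, Nat.add_sub_cancel]

end Part4
section Part5

/-- Finset encoding of an ordered preference set. -/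
def encF (a : List ℕ) : Finset ℕ := (encL a).toFinset

lemma encL_sorted_le {a : List ℕ} (ha : a.Pairwise (· ≤ ·)) : (encL a).Pairwise (· ≤ ·) :=
  (encL_sorted ha).imp (fun h => le_of_lt h)

lemma encL_nodup {a : List ℕ} (ha : a.Pairwise (· ≤ ·)) : (encL a).Nodup :=
  (encL_sorted ha).nodup

lemma encF_card {a : List ℕ} (ha : a.Pairwise (· ≤ ·)) : (encF a).card = a.length := by
  rw [encF, List.toFinset_card_of_nodup (encL_nodup ha), encL_length]

lemma mem_encF {x : ℕ} {a : List ℕ} :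
    x ∈ encF a ↔ ∃ i, ∃ (h : i < a.length), a[i] + i = x := by
  rw [encF, List.mem_toFinset, List.mem_iff_getElem]
  constructor
  · rintro ⟨i, hi, rfl⟩
    exact ⟨i, by simpa using hi, (encL_getElem a i hi).symm⟩
  · rintro ⟨i, hi, rfl⟩
    exact ⟨i, by simpa using hi, encL_getElem a i (by simpa using hi)⟩

lemma encF_subset {n : ℕ} {a : List ℕ} (hpref : IsPrefSet n a) :
    encF a ⊆ Finset.Icc 1 (2*n-1) := by
  intro x hx
  rw [mem_encF] at hx
  obtain ⟨i, hi, rfl⟩ := hx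
  have hb := hpref.2 _ (List.getElem_mem hi)
  have hlen := hpref.1
  rw [Finset.mem_Icc]
  omega

lemma encF_one {a : List ℕ} {n : ℕ} (hpref : IsPrefSet n a) : ∀ x ∈ encF a, 1 ≤ x := by
  intro x hx
  have := encF_subset hpref hx
  rw [Finset.mem_Icc] at this
  exact this.1

lemma cntF_encF {a : List ℕ} (ha : a.Pairwise (· ≤ ·)) (t : ℕ) :
    cntF (encF a) t = (encL a).countP (fun x => decide (x ≤ t)) := by
  rw [cntF, encF, List.countP_eq_length_filter]
  rw [show Finset.filter (· ≤ t) (encL a).toFinset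
      = Finset.filter (fun x => (fun y => decide (y ≤ t)) x = true) (encL a).toFinset by
    apply Finset.filter_congr; intro x _; simp]
  rw [← List.toFinset_filter]
  exact List.toFinset_card_of_nodup ((encL_nodup ha).filter _)

lemma crit_iff_touch {n k : ℕ} (hn : 1 ≤ n) (hk : k ≤ n - 1) {a : List ℕ}
    (hpref : IsPrefSet n a) (hsort : a.Pairwise (· ≤ ·)) :
    (∃ i < n - k, i + k + 1 ≤ a.getD i 0) ↔
      ∃ t ≤ 2*n-1, t = 2 * cntF (encF a) t + k := by
  have hlen := hpref.1
  have hone := encF_one hpref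
  constructor
  · rintro ⟨i, hik, hai⟩
    have hia : i < a.length := by omega
    rw [List.getD_eq_getElem a 0 hia] at hai
    -- count of elements ≤ 2i + k is at most i
    have hcnt : cntF (encF a) (2*i+k) ≤ i := by
      rw [cntF_encF hsort]
      apply countP_le_of_lt (encL_sorted_le hsort) i (by simpa using hia)
      rw [encL_getElem a i (by simpa using hia)]
      omega
    have hivt := int_ivt (fun t => (t : ℤ) - 2 * cntF (encF a) t - k)
      (fun t => by
        have := cntF_mono (encF a) t
        push_cast
        omega)
      (Nat.zero_le (2*i+k))
      (by simp [cntF_zero hone])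
      (by
        show (0:ℤ) ≤ ((2*i+k : ℕ) : ℤ) - 2 * (cntF (encF a) (2*i+k) : ℤ) - (k : ℤ)
        push_cast
        omega)
    obtain ⟨t, _, htm, ht0⟩ := hivt
    have : (t : ℤ) - 2 * cntF (encF a) t - k = 0 := ht0
    exact ⟨t, by omega, by omega⟩
  · rintro ⟨t, htm, ht⟩
    set c := cntF (encF a) t with hc
    have hcn : c ≤ n := by
      have := cntF_le_card (encF a) t
      rw [encF_card hsort, hlen] at this
      omega
    -- elements above t fit in (t, 2n-1]
    have hcompl : n - c ≤ (2*n-1) - t := by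
      have hsub2 : (encF a).filter (fun x => t < x) ⊆ Finset.Icc (t+1) (2*n-1) := by
        intro x hx
        rw [Finset.mem_filter] at hx
        have := encF_subset hpref hx.1
        rw [Finset.mem_Icc] at *
        omega
      have h2 := Finset.card_le_card hsub2
      rw [cntF_compl, Nat.card_Icc, encF_card hsort, hlen] at h2
      omega
    have hcnk : c < n - k := by omega
    have hca : c < a.length := by omega
    refine ⟨c, by omega, ?_⟩
    rw [List.getD_eq_getElem a 0 hca]
    by_contra hcon
    push_neg at hcon
    have := lt_countP_of_le (t := t) (encL_sorted_le hsort) c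
      (by simpa using hca) (by
        rw [encL_getElem a c (by simpa using hca)]
        omega)
    rw [← cntF_encF hsort] at this
    omega

lemma encF_image {n k : ℕ} (hn : 1 ≤ n) (hk : k ≤ n - 1) :
    encF '' {a : List ℕ | IsOrderedPrefSet n a ∧ k ≤ flaws n a} = ↑(setA n k) := by
  ext S
  simp only [Set.mem_image, Set.mem_setOf_eq, Finset.coe_filter, Finset.mem_coe]
  rw [mem_setA]
  constructor
  · rintro ⟨a, ⟨⟨hpref, hsort⟩, hflaws⟩, rfl⟩
    refine ⟨⟨encF_subset hpref, by rw [encF_card hsort, hpref.1]⟩, ?_⟩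
    rw [← crit_iff_touch hn hk hpref hsort]
    exact (flaws_ge_iff hn hk ⟨hpref, hsort⟩).mp hflaws
  · rintro ⟨⟨hsub, hcard⟩, htouch⟩
    set d := S.sort (· ≤ ·) with hd
    have hdsorted : d.Pairwise (· < ·) := (Finset.sortedLT_sort S).pairwise
    have hdone : ∀ x ∈ d, 1 ≤ x := by
      intro x hx
      rw [hd, Finset.mem_sort] at hx
      exact (Finset.mem_Icc.mp (hsub hx)).1
    have hdlen : d.length = n := by rw [hd, Finset.length_sort, hcard]
    have hdix : ∀ i (hi : i < d.length), i + 1 ≤ d[i] := strict_ge_index hdsorted hdone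
    have hdub : ∀ i (hi : i < d.length), d[i] ≤ n + i := by
      intro i hi
      have hgap := strict_gap hdsorted i (d.length - 1) (by omega) (by omega)
      have hmemd : ∀ y ∈ d, y ∈ S := by
        intro y hy
        rw [hd, Finset.mem_sort] at hy
        exact hy
      have hlast : d[d.length - 1]'(by omega) ≤ 2*n-1 :=
        (Finset.mem_Icc.mp (hsub (hmemd _ (List.getElem_mem _)))).2
      omega
    have halen : (decL d).length = n := by rw [decL_length, hdlen]
    have hasort : (decL d).Pairwise (· ≤ ·) := decL_sorted hdsorted hdone
    have haelem : ∀ x ∈ decL d, 1 ≤ x ∧ x ≤ n := by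
      intro x hx
      rw [List.mem_iff_getElem] at hx
      obtain ⟨i, hi, rfl⟩ := hx
      rw [decL_getElem d i (by simpa using hi)]
      have h1 := hdix i (by simpa using hi)
      have h2 := hdub i (by simpa using hi)
      constructor <;> omega
    have hapref : IsPrefSet n (decL d) := ⟨halen, haelem⟩
    have hencd : encL (decL d) = d := encL_decL d (fun i hi => by have := hdix i hi; omega)
    have hencF : encF (decL d) = S := by
      rw [encF, hencd, hd, Finset.sort_toFinset]
    refine ⟨decL d, ⟨⟨hapref, hasort⟩, ?_⟩, hencF⟩
    rw [flaws_ge_iff hn hk ⟨hapref, hasort⟩, crit_iff_touch hn hk hapref hasort, hencF]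
    exact htouch

lemma encF_injOn {n k : ℕ} :
    Set.InjOn encF {a : List ℕ | IsOrderedPrefSet n a ∧ k ≤ flaws n a} := by
  intro a ha b hb hab
  haveI : IsAntisymm ℕ (· < ·) := ⟨fun x y h1 h2 => absurd h1 (by omega)⟩
  have hsa := ha.1.2
  have hsb := hb.1.2
  have hperm : List.Perm (encL a) (encL b) :=
    List.perm_of_nodup_nodup_toFinset_eq (encL_nodup hsa) (encL_nodup hsb) hab
  have : encL a = encL b :=
    List.Perm.eq_of_pairwise' (encL_sorted hsa) (encL_sorted hsb) hperm
  have := congrArg decL this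
  rwa [decL_encL, decL_encL] at this

end Part5
theorem stmt0 (n k : ℕ) (hn : 1 ≤ n) (hk : k ≤ n - 1) :
    Nonempty ({a : List ℕ | IsOrderedPrefSet n a ∧ k ≤ flaws n a} ≃
      {x : Fin (n - k) → ℕ | ∑ i, x i = n + k}) ∧
    opGe n k = {x : Fin (n - k) → ℕ | ∑ i, x i = n + k}.ncard := by
  classical
  set L := {a : List ℕ | IsOrderedPrefSet n a ∧ k ≤ flaws n a} with hL
  set R := {x : Fin (n - k) → ℕ | ∑ i, x i = n + k} with hR
  have himg : encF '' L = ↑(setA n k) := encF_image hn hk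
  have hLcard : L.ncard = (2*n-1).choose (n+k) := by
    rw [← Set.ncard_image_of_injOn (encF_injOn (n := n) (k := k)), himg,
      Set.ncard_coe_finset, card_setA_eq_setB hn, card_setB]
  have hLfin : L.Finite := by
    apply Set.Finite.of_finite_image _ encF_injOn
    rw [himg]
    exact (setA n k).finite_toSet
  have eR : ↥R ≃ Sym (Fin (n - k)) (n + k) :=
    (Equiv.subtypeEquivRight (fun x => Iff.rfl)).trans
      (Sym.equivNatSumOfFintype (Fin (n - k)) (n + k)).symm
  have hRfinite : Finite ↥R := Finite.of_equiv _ eR.symm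
  have hRfin : R.Finite := Set.finite_coe_iff.mp hRfinite
  have hRcard : R.ncard = (2*n-1).choose (n+k) := by
    rw [← Nat.card_coe_set_eq, Nat.card_congr eR, Nat.card_eq_fintype_card,
      Sym.card_sym_eq_choose, Fintype.card_fin]
    congr 1
    omega
  constructor
  · haveI := hLfin.fintype
    haveI := hRfin.fintype
    refine ⟨Fintype.equivOfCardEq ?_⟩
    rw [← Nat.card_eq_fintype_card, ← Nat.card_eq_fintype_card,
      Nat.card_coe_set_eq, Nat.card_coe_set_eq, hLcard, hRcard]
  · show L.ncard = R.ncard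
    rw [hLcard, hRcard]
end

section
/- For integers n ≥ 1 and 0 ≤ k ≤ n−1, the number op_{n,k} of ordered preference sets of length n with exactly k flaws satisfies n · op_{n,k} = (k+1) · C(2n, n−k−1), i.e., op_{n,k} = ((k+1)/n) C(2n, n−k−1). -/
/-! ### Auxiliary development -/

/-- Simulation of the parking process on a sorted list using only the top `T`
of the occupied interval. -/
def simP (n : ℕ) : List ℕ → ℕ → ℕ
  | [], _ => 0
  | p :: rest, T => if max p T ≤ n then simP n rest (max p T + 1) else simP n rest T + 1

/-- The final "unconstrained top" of the parking process. -/
def WP : List ℕ → ℕ → ℕ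
  | [], U => U
  | p :: rest, U => WP rest (max p U + 1)

/-- `Caps c a` means the `j`-th entry (1-based) of `a` is at most `c + j`. -/
def Caps : ℕ → List ℕ → Prop
  | _, [] => True
  | c, p :: rest => p ≤ c + 1 ∧ Caps (c + 1) rest

/-- Ballot-style recursive count. -/
def Rc : ℕ → ℕ → ℤ → ℕ
  | 0, _, _ => 1
  | m + 1, 0, d => if 0 ≤ d then Rc m 0 (d + 1) else 0
  | m + 1, t + 1, d => (if 0 ≤ d then Rc m (t + 1) (d + 1) else 0) + Rc (m + 1) t (d - 1)
  termination_by m t _ => (m, t)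

lemma find_free (n : ℕ) (occ : Finset ℕ) (T : ℕ) :
    ∀ c p, (∀ j, p ≤ j → j < p + c → (j ∈ occ ↔ j < T)) →
    (List.range' p c).find? (fun j => decide (j ∉ occ)) =
      if max p T < p + c then some (max p T) else none := by
  intro c
  induction c with
  | zero =>
    intro p _
    have : ¬ max p T < p + 0 := by
      have := le_max_left p T; omega
    simp [this]
  | succ c ih =>
    intro p hinv
    rw [List.range'_succ]
    by_cases hp : p ∈ occ
    · have hpT : p < T := (hinv p le_rfl (by omega)).1 hp
      rw [List.find?_cons_of_neg (by simp [hp])]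
      rw [ih (p + 1) (fun j hj hj' => hinv j (by omega) (by omega))]
      have h1 : max (p + 1) T = T := max_eq_right (by omega)
      have h2 : max p T = T := max_eq_right (by omega)
      rw [h1, h2]
      congr 1
      · simp only [eq_iff_iff]; omega
    · have hpT : ¬ p < T := fun h => hp ((hinv p le_rfl (by omega)).2 h)
      have h2 : max p T = p := max_eq_left (by omega)
      rw [List.find?_cons_of_pos (by simp [hp])]
      rw [h2, if_pos (by omega)]

lemma flawsFrom_eq_simP (n : ℕ) :
    ∀ (a : List ℕ) (q : ℕ) (occ : Finset ℕ) (T : ℕ),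
      a.Pairwise (· ≤ ·) → (∀ x ∈ a, q ≤ x ∧ x ≤ n) →
      (∀ j, q ≤ j → j ≤ n → (j ∈ occ ↔ j < T)) →
      flawsFrom n a occ = simP n a T := by
  intro a
  induction a with
  | nil => intro q occ T _ _ _; rfl
  | cons p rest ih =>
    intro q occ T hsort hmem hinv
    obtain ⟨hqp, hpn⟩ := hmem p (by simp)
    have hrest : ∀ x ∈ rest, p ≤ x ∧ x ≤ n := fun x hx =>
      ⟨(List.pairwise_cons.mp hsort).1 x hx, (hmem x (by simp [hx])).2⟩
    have hsort' : rest.Pairwise (· ≤ ·) := (List.pairwise_cons.mp hsort).2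
    have hff : firstFree n occ p =
        if max p T < p + (n + 1 - p) then some (max p T) else none := by
      exact find_free n occ T (n + 1 - p) p
        (fun j hj hj' => hinv j (le_trans hqp hj) (by omega))
    have hpn' : p + (n + 1 - p) = n + 1 := by omega
    rw [hpn'] at hff
    by_cases hM : max p T ≤ n
    · have hff' : firstFree n occ p = some (max p T) := by rw [hff, if_pos (by omega)]
      show flawsFrom n (p :: rest) occ = simP n (p :: rest) T
      rw [show flawsFrom n (p :: rest) occ =
        (match firstFree n occ p with
         | none => flawsFrom n rest occ + 1
         | some j => flawsFrom n rest (insert j occ)) from rfl, hff']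
      simp only [simP, if_pos hM]
      refine ih p (insert (max p T) occ) (max p T + 1) hsort' hrest ?_
      intro j hj hjn
      rcases eq_or_ne j (max p T) with rfl | hne
      · simp
      · rw [Finset.mem_insert]
        have hjo := hinv j (le_trans hqp hj) hjn
        have hmaxc := max_choice p T
        constructor
        · rintro (h | h)
          · exact absurd h hne
          · have := hjo.1 h
            have := le_max_right p T; omega
        · intro h
          right
          rw [hjo]
          rcases hmaxc with h' | h' <;> omega
    · have hff' : firstFree n occ p = none := by rw [hff, if_neg (by omega)]
      show flawsFrom n (p :: rest) occ = simP n (p :: rest) T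
      rw [show flawsFrom n (p :: rest) occ =
        (match firstFree n occ p with
         | none => flawsFrom n rest occ + 1
         | some j => flawsFrom n rest (insert j occ)) from rfl, hff']
      simp only [simP, if_neg hM]
      congr 1
      exact ih p occ T hsort' hrest (fun j hj hjn => hinv j (le_trans hqp hj) hjn)

lemma WP_big : ∀ (a : List ℕ) (U : ℕ), (∀ x ∈ a, x < U) → WP a U = U + a.length := by
  intro a
  induction a with
  | nil => intro U _; simp [WP]
  | cons p rest ih =>
    intro U h
    have hp : p < U := h p (by simp)
    have : max p U = U := max_eq_right (by omega)
    rw [WP, this, ih (U + 1) (fun x hx => by have := h x (by simp [hx]); omega)]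
    simp; omega

lemma simP_allfail (n : ℕ) : ∀ (a : List ℕ) (T : ℕ), n + 1 ≤ T → simP n a T = a.length := by
  intro a
  induction a with
  | nil => intro T _; rfl
  | cons p rest ih =>
    intro T hT
    have : ¬ max p T ≤ n := by have := le_max_right p T; omega
    rw [simP, if_neg this, ih T hT]; rfl

lemma simP_eq_WP (n : ℕ) : ∀ (a : List ℕ) (T : ℕ), (∀ x ∈ a, x ≤ n) → T ≤ n + 1 →
    simP n a T = WP a T - (n + 1) := by
  intro a
  induction a with
  | nil => intro T _ hT; show 0 = T - (n+1); omega
  | cons p rest ih =>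
    intro T hmem hT
    have hpn : p ≤ n := hmem p (by simp)
    have hrest : ∀ x ∈ rest, x ≤ n := fun x hx => hmem x (by simp [hx])
    by_cases hM : max p T ≤ n
    · rw [simP, if_pos hM, WP, ih (max p T + 1) hrest (by omega)]
    · have hTn : T = n + 1 := by
        have := max_choice p T; rcases this with h | h <;> omega
      have hmax : max p T = n + 1 := by subst hTn; exact max_eq_right (by omega)
      rw [simP, if_neg hM, WP, hmax, simP_allfail n rest T (by omega),
        WP_big rest (n + 1 + 1) (fun x hx => by have := hrest x hx; omega)]
      omega

lemma flaws_eq_WP (n : ℕ) (a : List ℕ) (hsort : a.Pairwise (· ≤ ·))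
    (hmem : ∀ x ∈ a, 1 ≤ x ∧ x ≤ n) : flaws n a = WP a 0 - (n + 1) := by
  rw [flaws, flawsFrom_eq_simP n a 1 ∅ 0 hsort hmem (by intro j hj hjn; simp)]
  exact simP_eq_WP n a 0 (fun x hx => (hmem x hx).2) (by omega)

lemma WP_le_iff : ∀ (a : List ℕ) (c U : ℕ),
    WP a U ≤ c + a.length + 1 ↔ U ≤ c + 1 ∧ Caps c a := by
  intro a
  induction a with
  | nil => intro c U; simp [WP, Caps]
  | cons p rest ih =>
    intro c U
    rw [WP, show c + (p :: rest).length + 1 = (c + 1) + rest.length + 1 by simp; omega,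
      ih (c + 1) (max p U + 1)]
    show max p U + 1 ≤ c + 1 + 1 ∧ _ ↔ _ ∧ (p ≤ c + 1 ∧ _)
    have : max p U + 1 ≤ c + 1 + 1 ↔ p ≤ c + 1 ∧ U ≤ c + 1 := by
      rw [Nat.add_le_add_iff_right, max_le_iff]
    rw [this]; tauto

lemma flaws_le_iff (n k : ℕ) (a : List ℕ) (hsort : a.Pairwise (· ≤ ·))
    (hmem : ∀ x ∈ a, 1 ≤ x ∧ x ≤ n) (hlen : a.length = n) :
    flaws n a ≤ k ↔ Caps k a := by
  rw [flaws_eq_WP n a hsort hmem]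
  have h2 : WP a 0 - (n + 1) ≤ k ↔ WP a 0 ≤ k + n + 1 := by omega
  rw [h2, ← hlen, WP_le_iff a k 0]
  simp

/-- Sets of sorted bounded lists with caps. -/
def Sset (n m lo c : ℕ) : Set (List ℕ) :=
  {a | a.length = m ∧ a.Pairwise (· ≤ ·) ∧ (∀ x ∈ a, lo ≤ x ∧ x ≤ n) ∧ Caps c a}

lemma finite_bounded (n : ℕ) : ∀ m, {a : List ℕ | a.length = m ∧ ∀ x ∈ a, x ≤ n}.Finite := by
  intro m
  induction m with
  | zero =>
    apply Set.Finite.subset (Set.finite_singleton ([] : List ℕ))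
    rintro a ⟨ha, -⟩
    simp [List.length_eq_zero_iff.mp ha]
  | succ m ih =>
    apply Set.Finite.subset (Set.Finite.image (fun pr : ℕ × List ℕ => pr.1 :: pr.2)
      ((Set.finite_Iic n).prod ih))
    rintro a ⟨ha, hmem⟩
    match a with
    | [] => simp at ha
    | x :: rest =>
      refine ⟨(x, rest), ⟨?_, ?_, ?_⟩, rfl⟩
      · exact hmem x (by simp)
      · simpa using ha
      · exact fun y hy => hmem y (by simp [hy])

lemma Sset_finite (n m lo c : ℕ) : (Sset n m lo c).Finite :=
  Set.Finite.subset (finite_bounded n m)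
    (fun a ⟨h1, _, h3, _⟩ => ⟨h1, fun x hx => (h3 x hx).2⟩)

lemma Sset_empty_of_gt (n m lo c : ℕ) (h : n < lo) : Sset n (m + 1) lo c = ∅ := by
  ext a
  simp only [Sset, Set.mem_setOf_eq, Set.mem_empty_iff_false, iff_false]
  rintro ⟨hlen, -, hmem, -⟩
  match a with
  | [] => simp at hlen
  | x :: rest => have := hmem x (by simp); omega

lemma Sset_split (n m lo c : ℕ) (hlo : lo ≤ n) :
    Sset n (m + 1) lo c =
      (if lo ≤ c + 1 then (List.cons lo) '' Sset n m lo (c + 1) else ∅) ∪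
        Sset n (m + 1) (lo + 1) c := by
  ext a
  constructor
  · rintro ⟨hlen, hsort, hmem, hcaps⟩
    match a with
    | [] => simp at hlen
    | p :: rest =>
      obtain ⟨hlop, hpn⟩ := hmem p (by simp)
      rcases eq_or_lt_of_le hlop with rfl | hgt
      · left
        obtain ⟨hcap1, hcaps'⟩ := hcaps
        rw [if_pos hcap1]
        refine ⟨rest, ⟨by simpa using hlen, (List.pairwise_cons.mp hsort).2, ?_, hcaps'⟩, rfl⟩
        exact fun x hx => ⟨(List.pairwise_cons.mp hsort).1 x hx, (hmem x (by simp [hx])).2⟩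
      · right
        refine ⟨hlen, hsort, ?_, hcaps⟩
        intro x hx
        rcases List.mem_cons.mp hx with rfl | hx'
        · exact ⟨hgt, hpn⟩
        · have := (List.pairwise_cons.mp hsort).1 x hx'
          exact ⟨by omega, (hmem x hx).2⟩
  · rintro (h | h)
    · split_ifs at h with hcap
      · obtain ⟨rest, ⟨hlen, hsort, hmem, hcaps⟩, rfl⟩ := h
        refine ⟨by simpa using hlen, List.pairwise_cons.mpr ⟨fun b hb => (hmem b hb).1, hsort⟩,
          ?_, hcap, hcaps⟩
        intro x hx
        rcases List.mem_cons.mp hx with rfl | hx'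
        · exact ⟨le_rfl, hlo⟩
        · exact ⟨le_trans le_rfl (hmem x hx').1, (hmem x hx').2⟩
      · exact absurd h (Set.notMem_empty a)
    · obtain ⟨hlen, hsort, hmem, hcaps⟩ := h
      exact ⟨hlen, hsort, fun x hx => ⟨by have := (hmem x hx).1; omega, (hmem x hx).2⟩, hcaps⟩

lemma Sset_disjoint (n m lo c : ℕ) :
    Disjoint ((List.cons lo) '' Sset n m lo (c + 1)) (Sset n (m + 1) (lo + 1) c) := by
  rw [Set.disjoint_left]
  rintro a ⟨rest, -, rfl⟩ ⟨-, -, hmem, -⟩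
  have := (hmem lo (by simp)).1
  omega

lemma Rc_neg : ∀ (t : ℕ) (d : ℤ), d < 0 → ∀ m, Rc (m + 1) t d = 0 := by
  intro t
  induction t with
  | zero => intro d hd m; rw [Rc, if_neg (by omega)]
  | succ t ih => intro d hd m; rw [Rc, if_neg (by omega), ih (d - 1) (by omega) m]

lemma count_Sset (n : ℕ) : ∀ m t lo c, lo + t = n →
    (Sset n m lo c).ncard = Rc m t ((c : ℤ) + 1 - lo) := by
  intro m
  induction m with
  | zero =>
    intro t lo c _
    have : Sset n 0 lo c = {[]} := by
      ext a
      simp only [Sset, Set.mem_setOf_eq, Set.mem_singleton_iff]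
      constructor
      · rintro ⟨hlen, -⟩; exact List.length_eq_zero_iff.mp hlen
      · rintro rfl; exact ⟨rfl, List.Pairwise.nil, by simp, trivial⟩
    rw [this, Set.ncard_singleton, Rc]
  | succ m ihm =>
    intro t
    induction t with
    | zero =>
      intro lo c hlo
      have hlon : lo = n := by omega
      rw [Sset_split n m lo c (by omega), Sset_empty_of_gt n m (lo + 1) c (by omega),
        Set.union_empty]
      by_cases hcap : lo ≤ c + 1
      · rw [if_pos hcap, Set.ncard_image_of_injective _ List.cons_injective,
          ihm 0 lo (c + 1) (by omega), Rc, if_pos (by omega)]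
        congr 1; omega
      · rw [if_neg hcap, Set.ncard_empty, Rc, if_neg (by omega)]
    | succ t iht =>
      intro lo c hlo
      rw [Sset_split n m lo c (by omega)]
      have hB := iht (lo + 1) c (by omega)
      push_cast at hB
      have hdisj : Disjoint (if lo ≤ c + 1 then (List.cons lo) '' Sset n m lo (c + 1) else ∅)
          (Sset n (m + 1) (lo + 1) c) := by
        split_ifs
        · exact Sset_disjoint n m lo c
        · exact Set.empty_disjoint _
      have hfinA : (if lo ≤ c + 1 then (List.cons lo) '' Sset n m lo (c + 1) else ∅).Finite := by
        split_ifs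
        · exact Set.Finite.image _ (Sset_finite n m lo (c + 1))
        · exact Set.finite_empty
      rw [Set.ncard_union_eq hdisj hfinA (Sset_finite n (m + 1) (lo + 1) c), hB]
      have hd' : (c : ℤ) + 1 - (lo + 1) = ((c : ℤ) + 1 - lo) - 1 := by ring
      rw [hd', Rc]
      congr 1
      by_cases hcap : lo ≤ c + 1
      · rw [if_pos hcap, if_pos (by omega), Set.ncard_image_of_injective _ List.cons_injective,
          ihm (t + 1) lo (c + 1) hlo]
        congr 1; omega
      · rw [if_neg hcap, if_neg (by omega), Set.ncard_empty]

lemma chooseInt_coe (a b : ℕ) : chooseInt a (b : ℤ) = a.choose b := by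
  simp [chooseInt]

lemma chooseInt_zero_of_lt {a : ℕ} {b : ℤ} (h : (a : ℤ) < b) : chooseInt a b = 0 := by
  rw [chooseInt, if_pos (by omega)]
  exact Nat.choose_eq_zero_of_lt (by omega)

lemma chooseInt_pascal (a : ℕ) (b : ℤ) :
    chooseInt (a + 1) b = chooseInt a b + chooseInt a (b - 1) := by
  rcases lt_trichotomy b 0 with hb | rfl | hb
  · rw [chooseInt, chooseInt, chooseInt, if_neg (by omega), if_neg (by omega), if_neg (by omega)]
  · rw [chooseInt, chooseInt, chooseInt, if_pos le_rfl, if_pos le_rfl, if_neg (by omega)]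
    simp
  · obtain ⟨s, rfl⟩ : ∃ s : ℕ, b = (s : ℤ) + 1 := ⟨(b - 1).toNat, by omega⟩
    rw [chooseInt, chooseInt, chooseInt, if_pos (by omega), if_pos (by omega), if_pos (by omega)]
    have h1 : ((s : ℤ) + 1).toNat = s + 1 := by omega
    have h2 : ((s : ℤ) + 1 - 1).toNat = s := by omega
    rw [h1, h2, Nat.choose_succ_succ, Nat.add_comm]

lemma Rc_closed : ∀ (m t : ℕ) (d : ℤ), -1 ≤ d → (t : ℤ) ≤ m + d →
    (Rc m t d : ℤ) = ((m + t).choose m : ℤ) - chooseInt (m + t) (m + d + 1) := by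
  intro m
  induction m with
  | zero =>
    intro t d _ htd
    rw [Rc, chooseInt_zero_of_lt (by push_cast; omega)]
    simp
  | succ m ihm =>
    intro t
    induction t with
    | zero =>
      intro d hd htd
      rcases eq_or_lt_of_le hd with rfl | hd'
      · rw [Rc, if_neg (by omega)]
        have h1 : ((m + 1 : ℕ) : ℤ) + -1 + 1 = ((m + 1 : ℕ) : ℤ) := by ring
        rw [h1, chooseInt_coe]
        simp
      · rw [Rc, if_pos (by omega), ihm 0 (d + 1) (by omega) (by push_cast; omega)]
        rw [chooseInt_zero_of_lt (by push_cast; omega), chooseInt_zero_of_lt (by push_cast; omega)]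
        simp
    | succ t iht =>
      intro d hd htd
      rcases eq_or_lt_of_le hd with rfl | hd'
      · rw [Rc, if_neg (by omega), Rc_neg t (-1 - 1) (by omega) m]
        have h1 : ((m + 1 : ℕ) : ℤ) + -1 + 1 = ((m + 1 : ℕ) : ℤ) := by ring
        rw [h1, chooseInt_coe]
        simp
      · have h0d : (0 : ℤ) ≤ d := by omega
        rw [Rc, if_pos h0d]
        push_cast
        rw [ihm (t + 1) (d + 1) (by omega) (by push_cast; omega),
          iht (d - 1) (by omega) (by push_cast; omega)]
        have e1 : m + (t + 1) = m + t + 1 := by omega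
        have e2 : m + 1 + t = m + t + 1 := by omega
        have e3 : m + 1 + (t + 1) = (m + t + 1) + 1 := by omega
        rw [e1, e2, e3]
        push_cast
        have p1 : (((m + t + 1) + 1).choose (m + 1) : ℤ) =
            ((m + t + 1).choose m : ℤ) + ((m + t + 1).choose (m + 1) : ℤ) := by
          exact_mod_cast congrArg Nat.cast (Nat.choose_succ_succ (m + t + 1) m)
        have p2 : (chooseInt ((m + t + 1) + 1) ((m : ℤ) + 1 + d + 1) : ℤ) =
            (chooseInt (m + t + 1) ((m : ℤ) + 1 + d + 1) : ℤ) +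
              (chooseInt (m + t + 1) ((m : ℤ) + 1 + d) : ℤ) := by
          rw [chooseInt_pascal]
          push_cast
          congr 2
          ring
        rw [show ((m : ℤ) + (d + 1) + 1) = (m : ℤ) + 1 + d + 1 from by ring,
          show ((m : ℤ) + 1 + (d - 1) + 1) = (m : ℤ) + 1 + d from by ring,
          p1, p2]
        ring

theorem stmt3 (n k : ℕ) (hn : 1 ≤ n) (hk : k ≤ n - 1) :
    n * opEq n k = (k + 1) * Nat.choose (2 * n) (n - k - 1) := by
  have hset : ∀ j : ℕ, {a : List ℕ | IsOrderedPrefSet n a ∧ flaws n a ≤ j} = Sset n n 1 j := by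
    intro j; ext a
    simp only [Set.mem_setOf_eq, Sset, IsOrderedPrefSet, IsPrefSet]
    constructor
    · rintro ⟨⟨⟨hlen, hmem⟩, hsort⟩, hfl⟩
      exact ⟨hlen, hsort, hmem, (flaws_le_iff n j a hsort hmem hlen).mp hfl⟩
    · rintro ⟨hlen, hsort, hmem, hcaps⟩
      exact ⟨⟨⟨hlen, hmem⟩, hsort⟩, (flaws_le_iff n j a hsort hmem hlen).mpr hcaps⟩
  have hfin : ∀ j : ℕ, {a : List ℕ | IsOrderedPrefSet n a ∧ flaws n a ≤ j}.Finite := by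
    intro j; rw [hset j]; exact Sset_finite n n 1 j
  have hcount : ∀ j : ℕ, {a : List ℕ | IsOrderedPrefSet n a ∧ flaws n a ≤ j}.ncard
      = Rc n (n - 1) (j : ℤ) := by
    intro j
    rw [hset j, count_Sset n n (n - 1) 1 j (by omega)]
    congr 1
    push_cast
    ring
  -- the number with exactly `k` flaws, as an integer
  have hZ : (opEq n k : ℤ) = (Rc n (n - 1) (k : ℤ) : ℤ) - (Rc n (n - 1) ((k : ℤ) - 1) : ℤ) := by
    rcases Nat.eq_zero_or_pos k with rfl | hkpos
    · have h0 : {a : List ℕ | IsOrderedPrefSet n a ∧ flaws n a = 0}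
          = {a : List ℕ | IsOrderedPrefSet n a ∧ flaws n a ≤ 0} := by
        ext a
        simp only [Set.mem_setOf_eq]
        exact ⟨fun ⟨h1, h2⟩ => ⟨h1, by omega⟩, fun ⟨h1, h2⟩ => ⟨h1, by omega⟩⟩
      have hneg : Rc n (n - 1) (((0 : ℕ) : ℤ) - 1) = 0 := by
        obtain ⟨m, rfl⟩ : ∃ m, n = m + 1 := ⟨n - 1, by omega⟩
        exact Rc_neg (m + 1 - 1) (((0 : ℕ) : ℤ) - 1) (by norm_num) m
      rw [opEq, h0, hcount 0, hneg]
      push_cast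
      ring
    · have hsub : {a : List ℕ | IsOrderedPrefSet n a ∧ flaws n a ≤ k - 1}
          ⊆ {a : List ℕ | IsOrderedPrefSet n a ∧ flaws n a ≤ k} := by
        rintro a ⟨h1, h2⟩; exact ⟨h1, by omega⟩
      have hdiff : {a : List ℕ | IsOrderedPrefSet n a ∧ flaws n a = k}
          = {a : List ℕ | IsOrderedPrefSet n a ∧ flaws n a ≤ k}
            \ {a : List ℕ | IsOrderedPrefSet n a ∧ flaws n a ≤ k - 1} := by
        ext a
        simp only [Set.mem_setOf_eq, Set.mem_diff]
        constructor
        · rintro ⟨h1, h2⟩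
          exact ⟨⟨h1, by omega⟩, fun h => by omega⟩
        · rintro ⟨⟨h1, h2⟩, h3⟩
          refine ⟨h1, ?_⟩
          by_contra hne
          exact h3 ⟨h1, by omega⟩
      have hle : {a : List ℕ | IsOrderedPrefSet n a ∧ flaws n a ≤ k - 1}.ncard
          ≤ {a : List ℕ | IsOrderedPrefSet n a ∧ flaws n a ≤ k}.ncard :=
        Set.ncard_le_ncard hsub (hfin k)
      have hd : opEq n k = {a : List ℕ | IsOrderedPrefSet n a ∧ flaws n a ≤ k}.ncard
          - {a : List ℕ | IsOrderedPrefSet n a ∧ flaws n a ≤ k - 1}.ncard := by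
        rw [opEq, hdiff, Set.ncard_diff hsub (hfin (k - 1))]
      rw [hd]
      rw [Nat.cast_sub hle, hcount k, hcount (k - 1),
        show ((k - 1 : ℕ) : ℤ) = (k : ℤ) - 1 from by
          rw [Nat.cast_sub hkpos]; push_cast; ring]
  -- closed forms
  have hc1 : ((n - 1 : ℕ) : ℤ) = (n : ℤ) - 1 := by
    rw [Nat.cast_sub hn]; push_cast; ring
  have hA := Rc_closed n (n - 1) (k : ℤ) (by omega) (by rw [hc1]; omega)
  have hB := Rc_closed n (n - 1) ((k : ℤ) - 1) (by omega) (by rw [hc1]; omega)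
  have h2n : n + (n - 1) = 2 * n - 1 := by omega
  rw [h2n] at hA hB
  have hcA : chooseInt (2 * n - 1) ((n : ℤ) + (k : ℤ) + 1) = (2 * n - 1).choose (n + k + 1) := by
    rw [show ((n : ℤ) + (k : ℤ) + 1) = ((n + k + 1 : ℕ) : ℤ) from by push_cast; ring,
      chooseInt_coe]
  have hcB : chooseInt (2 * n - 1) ((n : ℤ) + ((k : ℤ) - 1) + 1) = (2 * n - 1).choose (n + k) := by
    rw [show ((n : ℤ) + ((k : ℤ) - 1) + 1) = ((n + k : ℕ) : ℤ) from by push_cast; ring,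
      chooseInt_coe]
  rw [hcA] at hA
  rw [hcB] at hB
  have hZ2 : (opEq n k : ℤ) = ((2 * n - 1).choose (n + k) : ℤ)
      - ((2 * n - 1).choose (n + k + 1) : ℤ) := by
    rw [hZ, hA, hB]; ring
  -- binomial identities
  have hsymm : Nat.choose (2 * n) (n - k - 1) = Nat.choose (2 * n) (n + k + 1) := by
    rw [← Nat.choose_symm (show n + k + 1 ≤ 2 * n by omega)]
    congr 1
    omega
  have hpas : Nat.choose (2 * n) (n + k + 1)
      = (2 * n - 1).choose (n + k) + (2 * n - 1).choose (n + k + 1) := by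
    rw [show 2 * n = (2 * n - 1) + 1 from by omega]
    exact Nat.choose_succ_succ (2 * n - 1) (n + k)
  have hkey := Nat.choose_succ_right_eq (2 * n - 1) (n + k)
  have hsubeq : 2 * n - 1 - (n + k) = n - (k + 1) := by omega
  rw [hsubeq] at hkey
  have hkeyZ : ((2 * n - 1).choose (n + k + 1) : ℤ) * ((n : ℤ) + k + 1)
      = ((2 * n - 1).choose (n + k) : ℤ) * ((n : ℤ) - k - 1) := by
    have := congrArg (Nat.cast : ℕ → ℤ) hkey
    push_cast [Nat.cast_sub (show k + 1 ≤ n by omega)] at this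
    linarith [this]
  rw [hsymm, hpas]
  have final : (n : ℤ) * (opEq n k : ℤ)
      = ((k : ℤ) + 1) * (((2 * n - 1).choose (n + k) : ℤ)
        + ((2 * n - 1).choose (n + k + 1) : ℤ)) := by
    rw [hZ2]
    linear_combination -hkeyZ
  exact_mod_cast final
end

section
/- For integers n ≥ 1 and 0 ≤ k ≤ n−1, the number op_{n,≤k} of ordered preference sets of length n with at most k flaws equals C(2n−1, n−1) − C(2n−1, n−k−2). -/
/-! ### Auxiliary development -/

/-- Simplified parking process for sorted lists. -/
def gpark (n : ℕ) : List ℕ → ℕ → ℕ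
  | [], _ => 0
  | p :: rest, m =>
    if max m p ≤ n then gpark n rest (max m p + 1) else gpark n rest (max m p) + 1


lemma find?_range'_some {P : ℕ → Bool} :
    ∀ (len p t : ℕ), p ≤ t → t < p + len → (∀ j, p ≤ j → j < t → P j = false) →
      P t = true → (List.range' p len).find? P = some t := by
  intro len
  induction len with
  | zero => omega
  | succ l ih =>
    intro p t h1 h2 h3 h4
    rw [List.range'_succ, List.find?_cons]
    rcases eq_or_lt_of_le h1 with rfl | hlt
    · simp [h4]
    · rw [h3 p le_rfl hlt]
      exact ih (p+1) t hlt (by omega) (fun j hj hj2 => h3 j (by omega) hj2) h4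

lemma find?_range'_none {P : ℕ → Bool} :
    ∀ (len p : ℕ), (∀ j, p ≤ j → j < p + len → P j = false) →
    (List.range' p len).find? P = none := by
  intro len
  induction len with
  | zero => simp
  | succ l ih =>
    intro p h
    rw [List.range'_succ, List.find?_cons, h p le_rfl (by omega)]
    exact ih (p+1) (fun j hj hj2 => h j (by omega) (by omega))

lemma flawsFrom_eq_gpark (n : ℕ) :
    ∀ (a : List ℕ) (occ : Finset ℕ) (q m : ℕ), q ≤ m →
      (∀ x ∈ a, q ≤ x) → (∀ x ∈ a, x ≤ n) → a.Pairwise (· ≤ ·) →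
      (∀ j, q ≤ j → (j ∈ occ ↔ j < m)) →
      flawsFrom n a occ = gpark n a m := by
  intro a
  induction a with
  | nil => intros; rfl
  | cons p rest ih =>
    intro occ q m hqm hq hn hs inv
    have hp : q ≤ p := hq p List.mem_cons_self
    have hpn : p ≤ n := hn p List.mem_cons_self
    rw [List.pairwise_cons] at hs
    have hq' : ∀ x ∈ rest, p ≤ x := hs.1
    have hn' : ∀ x ∈ rest, x ≤ n := fun x hx => hn x (List.mem_cons_of_mem _ hx)
    rw [flawsFrom, gpark]
    by_cases hM : max m p ≤ n
    · have hff : firstFree n occ p = some (max m p) := by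
        apply find?_range'_some
        · exact le_max_right m p
        · omega
        · intro j hj1 hj2
          have : j ∈ occ := (inv j (hp.trans hj1)).2 (by rcases max_cases m p with ⟨h1,h2⟩|⟨h1,h2⟩ <;> omega)
          simp [this]
        · have : max m p ∉ occ := fun h => by
            have h2 := (inv (max m p) (hqm.trans (le_max_left m p))).1 h
            exact absurd h2 (by simp)
          simp [this]
      rw [hff, if_pos hM]
      show flawsFrom n rest (insert (max m p) occ) = _
      apply ih _ p (max m p + 1) (by omega) hq' hn' hs.2
      intro j hj
      simp only [Finset.mem_insert, inv j (hp.trans hj)]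
      rcases max_cases m p with ⟨h1,h2⟩|⟨h1,h2⟩ <;> omega
    · have hff : firstFree n occ p = none := by
        apply find?_range'_none
        intro j hj1 hj2
        have hjm : j < m := by rcases max_cases m p with ⟨h1,h2⟩|⟨h1,h2⟩ <;> omega
        have : j ∈ occ := (inv j (hp.trans hj1)).2 hjm
        simp [this]
      rw [hff, if_neg hM]
      show flawsFrom n rest occ + 1 = _
      have hmx : max m p = m := by
        rcases max_cases m p with ⟨h1,h2⟩|⟨h1,h2⟩ <;> omega
      rw [hmx]
      have := ih occ p m (by omega) hq' hn' hs.2 (fun j hj => inv j (hp.trans hj))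
      omega

lemma gpark_le_iff (n : ℕ) :
    ∀ (a : List ℕ) (m k : ℕ), m ≤ n + 1 → (∀ x ∈ a, x ≤ n) → a.Pairwise (· ≤ ·) →
      (gpark n a m ≤ k ↔
        ∀ i (h : i < a.length), max m a[i] + (a.length - 1 - i) ≤ n + k) := by
  intro a
  induction a with
  | nil => intro m k _ _ _; simp [gpark]
  | cons p rest ih =>
    intro m k hm hn hs
    have hpn : p ≤ n := hn p List.mem_cons_self
    rw [List.pairwise_cons] at hs
    have hn' : ∀ x ∈ rest, x ≤ n := fun x hx => hn x (List.mem_cons_of_mem _ hx)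
    have key : ∀ j (h : j < rest.length), max m rest[j] = max (max m p) rest[j] := by
      intro j h
      rw [max_assoc, max_eq_right (hs.1 _ (List.getElem_mem h))]
    rw [gpark]
    by_cases hM : max m p ≤ n
    · rw [if_pos hM, ih (max m p + 1) k (by omega) hn' hs.2]
      constructor
      · intro S i hi
        match i, hi with
        | 0, hi =>
          simp only [List.getElem_cons_zero]
          rcases Nat.eq_zero_or_pos rest.length with h0 | h0
          · simp only [List.length_cons, h0]; omega
          · have h1 := S 0 h0
            have h2 : max m p + 1 ≤ max (max m p + 1) rest[0] := le_max_left _ _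
            simp only [List.length_cons]
            omega
        | i + 1, hi =>
          simp only [List.getElem_cons_succ, List.length_cons]
          have hi' : i < rest.length := by simpa using hi
          have h1 := S i hi'
          have h2 := key i hi'
          rcases max_cases (max m p) rest[i] with ⟨e1, e2⟩ | ⟨e1, e2⟩ <;>
            rcases max_cases (max m p + 1) rest[i] with ⟨f1, f2⟩ | ⟨f1, f2⟩ <;> omega
      · intro A i hi
        have h0 := A 0 (by simp)
        simp only [List.getElem_cons_zero, List.length_cons] at h0
        have h1 := A (i + 1) (by simp; omega)
        simp only [List.getElem_cons_succ, List.length_cons] at h1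
        rw [key i hi] at h1
        rcases max_cases (max m p) rest[i] with ⟨e1, e2⟩ | ⟨e1, e2⟩ <;>
          rcases max_cases (max m p + 1) rest[i] with ⟨f1, f2⟩ | ⟨f1, f2⟩ <;> omega
    · rw [if_neg hM]
      have hM1 : max m p = n + 1 := by
        rcases max_cases m p with ⟨e1, e2⟩ | ⟨e1, e2⟩ <;> omega
      rw [hM1]
      constructor
      · intro S i hi
        have hk1 : 1 ≤ k := by omega
        have S' : gpark n rest (n + 1) ≤ k - 1 := by omega
        rw [ih (n + 1) (k - 1) le_rfl hn' hs.2] at S'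
        match i, hi with
        | 0, hi =>
          simp only [List.getElem_cons_zero, List.length_cons, hM1]
          rcases Nat.eq_zero_or_pos rest.length with h0 | h0
          · omega
          · have h1 := S' 0 h0
            have h2 : max (n + 1) rest[0] = n + 1 :=
              max_eq_left ((hn' _ (List.getElem_mem h0)).trans (by omega))
            omega
        | i + 1, hi =>
          simp only [List.getElem_cons_succ, List.length_cons]
          have hi' : i < rest.length := by simpa using hi
          have h1 := S' 0 (by omega)
          have h2 : max (n + 1) rest[0] = n + 1 :=
            max_eq_left ((hn' _ (List.getElem_mem (by omega))).trans (by omega))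
          have h3 : max m rest[i] ≤ n + 1 :=
            max_le hm ((hn' _ (List.getElem_mem hi')).trans (by omega))
          omega
      · intro A
        have h0 := A 0 (by simp)
        simp only [List.getElem_cons_zero, List.length_cons, hM1] at h0
        have hg : gpark n rest (n + 1) ≤ k - 1 := by
          rw [ih (n + 1) (k - 1) le_rfl hn' hs.2]
          intro j hj
          have h2 : max (n + 1) rest[j] = n + 1 :=
            max_eq_left ((hn' _ (List.getElem_mem hj)).trans (by omega))
          omega
        omega

lemma flaws_le_iff_s4 (n k : ℕ) (a : List ℕ) (h : IsOrderedPrefSet n a) :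
    flaws n a ≤ k ↔ ∀ i (hi : i < a.length), a[i] ≤ i + 1 + k := by
  obtain ⟨⟨hlen, hmem⟩, hsort⟩ := h
  have h1 : ∀ x ∈ a, 1 ≤ x := fun x hx => (hmem x hx).1
  have h2 : ∀ x ∈ a, x ≤ n := fun x hx => (hmem x hx).2
  have e : flaws n a = gpark n a 1 := by
    apply flawsFrom_eq_gpark n a ∅ 1 1 le_rfl h1 h2 hsort
    intro j hj
    simp only [Finset.notMem_empty, false_iff]
    omega
  rw [e, gpark_le_iff n a 1 k (by omega) h2 hsort]
  constructor
  · intro S i hi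
    have := S i hi
    have hx := h2 _ (List.getElem_mem hi)
    have hmax : max 1 a[i] = a[i] := max_eq_right (h1 _ (List.getElem_mem hi))
    omega
  · intro A i hi
    have := A i hi
    have hmax : max 1 a[i] = a[i] := max_eq_right (h1 _ (List.getElem_mem hi))
    omega

lemma choose_step {L r : ℕ} (h : 2 * r + 1 ≤ L) : L.choose r ≤ L.choose (r + 1) := by
  have key := Nat.choose_succ_right_eq L r
  have h1 : L.choose r * (r + 1) ≤ L.choose r * (L - r) :=
    Nat.mul_le_mul_left _ (by omega)
  rw [← key] at h1
  exact Nat.le_of_mul_le_mul_right h1 (by omega)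

lemma choose_chain {L : ℕ} : ∀ (d x : ℕ), 2 * (x + d) ≤ L + 1 → L.choose x ≤ L.choose (x + d) := by
  intro d
  induction d with
  | zero => intro x _; simp
  | succ d ih =>
    intro x hx
    calc L.choose x ≤ L.choose (x + d) := ih x (by omega)
      _ ≤ L.choose (x + d + 1) := choose_step (by omega)
      _ = L.choose (x + (d + 1)) := by ring_nf

lemma choose_anti {L a b : ℕ} (hab : a ≤ b) (h : L ≤ a + b) : L.choose b ≤ L.choose a := by
  rcases le_or_gt b L with hbL | hbL
  · rcases le_or_gt (2 * a) (L + 1) with ha | ha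
    · have := choose_chain (L := L) (a - (L - b)) (L - b) (by omega)
      rw [Nat.add_sub_cancel' (by omega), Nat.choose_symm hbL] at this
      exact this
    · have := choose_chain (L := L) ((L - a) - (L - b)) (L - b) (by omega)
      rw [Nat.add_sub_cancel' (by omega), Nat.choose_symm hbL,
        Nat.choose_symm (by omega : a ≤ L)] at this
      exact this
  · rw [Nat.choose_eq_zero_of_lt hbL]
    exact Nat.zero_le _

def TSet (k s B : ℕ) : Set (List ℕ) :=
  {a | a.length = s ∧ a.Pairwise (· ≤ ·) ∧ (∀ x ∈ a, 1 ≤ x ∧ x ≤ B) ∧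
    ∀ i (h : i < a.length), a[i] ≤ i + 1 + k}

lemma TSet_finite (k s B : ℕ) : (TSet k s B).Finite := by
  apply Set.Finite.of_finite_image (f := fun a => a.map (fun x => (⟨min x B, by omega⟩ : Fin (B+1))))
  · apply Set.Finite.subset (List.finite_length_eq (Fin (B+1)) s)
    rintro l ⟨a, ha, rfl⟩
    simp [ha.1]
  · intro a ha b hb hab
    have key : ∀ c : List ℕ, c ∈ TSet k s B →
        (c.map (fun x => (⟨min x B, by omega⟩ : Fin (B+1)))).map Fin.val = c := by
      intro c hc
      rw [List.map_map]
      conv_rhs => rw [← List.map_id c]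
      apply List.map_congr_left
      intro x hx
      have := (hc.2.2.1 x hx).2
      simp [Function.comp, min_eq_left this]
    have h2 := congrArg (List.map Fin.val) hab
    dsimp only at h2
    rw [key a ha, key b hb] at h2
    exact h2

lemma TSet_zero (k B : ℕ) : TSet k 0 B = {([] : List ℕ)} := by
  ext a
  simp only [TSet, Set.mem_setOf_eq, Set.mem_singleton_iff, List.length_eq_zero_iff]
  constructor
  · exact fun h => h.1
  · rintro rfl
    refine ⟨rfl, List.Pairwise.nil, by simp, by simp⟩

lemma TSet_succ_zero (k s : ℕ) : TSet k (s + 1) 0 = ∅ := by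
  ext a
  simp only [TSet, Set.mem_setOf_eq, Set.mem_empty_iff_false, iff_false]
  rintro ⟨hlen, _, hb, _⟩
  have : a ≠ [] := by intro h; rw [h] at hlen; simp at hlen
  obtain ⟨x, hx⟩ := List.exists_mem_of_ne_nil a this
  have := hb x hx
  omega

lemma TSet_ncard_rec (k s B : ℕ) :
    (TSet k (s + 1) (B + 1)).ncard =
      (TSet k (s + 1) B).ncard +
        (if B + 1 ≤ s + 1 + k then (TSet k s (B + 1)).ncard else 0) := by
  classical
  set T1 : Set (List ℕ) := {a ∈ TSet k (s+1) (B+1) | (B+1) ∈ a} with hT1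
  have hsplit : TSet k (s + 1) (B + 1) = TSet k (s + 1) B ∪ T1 := by
    ext a
    constructor
    · intro ha
      by_cases hall : ∀ x ∈ a, x ≤ B
      · left
        exact ⟨ha.1, ha.2.1, fun x hx => ⟨(ha.2.2.1 x hx).1, hall x hx⟩, ha.2.2.2⟩
      · right
        push_neg at hall
        obtain ⟨x, hx, hxB⟩ := hall
        have : x = B + 1 := by have := (ha.2.2.1 x hx).2; omega
        exact ⟨ha, this ▸ hx⟩
    · rintro (ha | ha)
      · exact ⟨ha.1, ha.2.1, fun x hx => ⟨(ha.2.2.1 x hx).1, by have := (ha.2.2.1 x hx).2; omega⟩,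
          ha.2.2.2⟩
      · exact ha.1
  have hdisj : Disjoint (TSet k (s + 1) B) T1 := by
    rw [Set.disjoint_left]
    rintro a ha ⟨_, hmem⟩
    have := (ha.2.2.1 _ hmem).2
    omega
  rw [hsplit, Set.ncard_union_eq hdisj (TSet_finite _ _ _)
    ((TSet_finite k (s+1) (B+1)).subset (fun a ha => ha.1))]
  congr 1
  by_cases hg : B + 1 ≤ s + 1 + k
  · rw [if_pos hg]
    have himg : T1 = (fun b => b ++ [B + 1]) '' TSet k s (B + 1) := by
      ext a
      constructor
      · rintro ⟨ha, hmem⟩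
        have hne : a ≠ [] := List.ne_nil_of_mem hmem
        have hlast : a.getLast hne = B + 1 := by
          obtain ⟨i, hi, hival⟩ := List.mem_iff_getElem.1 hmem
          have hlen1 : a.length - 1 < a.length := by
            rw [ha.1]; omega
          have hle : a[i] ≤ a[a.length - 1] := by
            rcases eq_or_lt_of_le (Nat.le_sub_one_of_lt hi) with he | hlt
            · subst he; exact le_rfl
            · exact List.pairwise_iff_getElem.1 ha.2.1 i (a.length - 1) hi hlen1 hlt
          have hub := (ha.2.2.1 _ (List.getElem_mem hlen1)).2
          rw [List.getLast_eq_getElem]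
          omega
        refine ⟨a.dropLast, ?_, ?_⟩
        · have hlen : a.dropLast.length = s := by
            rw [List.length_dropLast, ha.1]
            omega
          refine ⟨hlen, ha.2.1.sublist (List.dropLast_sublist a), ?_, ?_⟩
          · exact fun x hx => ha.2.2.1 x ((List.dropLast_sublist a).subset hx)
          · intro i hi
            rw [List.getElem_dropLast]
            exact ha.2.2.2 i (by rw [ha.1]; rw [hlen] at hi; omega)
        · rw [← hlast]
          exact List.dropLast_append_getLast hne
      · rintro ⟨b, hb, rfl⟩
        have hlen : (b ++ [B+1]).length = s + 1 := by simp [hb.1]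
        have hsort : (b ++ [B+1]).Pairwise (· ≤ ·) := by
          rw [List.pairwise_append]
          exact ⟨hb.2.1, List.pairwise_singleton _ _,
            by simpa using fun y hy => (hb.2.2.1 y hy).2⟩
        refine ⟨⟨hlen, hsort, ?_, ?_⟩, by simp⟩
        · intro x hx
          rcases List.mem_append.1 hx with h | h
          · have := hb.2.2.1 x h; omega
          · simp at h; omega
        · intro i hi
          rw [hlen] at hi
          rcases Nat.lt_or_ge i b.length with hib | hib
          · rw [List.getElem_append_left hib]
            exact hb.2.2.2 i hib
          · have hbl : b.length = s := hb.1
            have : i = b.length := by omega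
            subst this
            rw [List.getElem_append_right (le_refl b.length)]
            simp
            omega
    rw [himg, Set.ncard_image_of_injective _ (List.append_left_injective [B+1])]
  · rw [if_neg hg]
    have : T1 = ∅ := by
      ext a
      simp only [Set.mem_empty_iff_false, iff_false]
      rintro ⟨ha, hmem⟩
      obtain ⟨i, hi, hival⟩ := List.mem_iff_getElem.1 hmem
      have := ha.2.2.2 i hi
      have hlen := ha.1
      omega
    rw [this, Set.ncard_empty]

lemma TSet_card (k : ℕ) :
    ∀ (s B : ℕ), B ≤ s + k + 1 →
      (TSet k s B).ncard = (s + B - 1).choose s - (s + B - 1).choose (s + k + 1) := by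
  have main : ∀ (N s B : ℕ), s + B ≤ N → B ≤ s + k + 1 →
      (TSet k s B).ncard = (s + B - 1).choose s - (s + B - 1).choose (s + k + 1) := by
    intro N
    induction N with
    | zero =>
      intro s B hN hreg
      obtain ⟨rfl, rfl⟩ : s = 0 ∧ B = 0 := by omega
      rw [TSet_zero, Set.ncard_singleton]
      simp [Nat.choose_eq_zero_of_lt (by omega : 0 < k + 1)]
    | succ N ihN =>
      intro s B hN hreg
      match s, B with
      | 0, B =>
        rw [TSet_zero, Set.ncard_singleton]
        have h1 : (0 + B - 1).choose 0 = 1 := Nat.choose_zero_right _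
        have h2 : (0 + B - 1).choose (0 + k + 1) = 0 :=
          Nat.choose_eq_zero_of_lt (by omega)
        omega
      | s + 1, 0 =>
        rw [TSet_succ_zero, Set.ncard_empty]
        have : (s + 1 + 0 - 1).choose (s + 1) = 0 := Nat.choose_eq_zero_of_lt (by omega)
        omega
      | s + 1, B + 1 =>
        rw [TSet_ncard_rec]
        by_cases hg : B + 1 ≤ s + 1 + k
        · rw [if_pos hg]
          rw [ihN (s + 1) B (by omega) (by omega), ihN s (B + 1) (by omega) (by omega)]
          -- arithmetic with Pascal
          have e1 : s + 1 + B - 1 = s + B := by omega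
          have e2 : s + (B + 1) - 1 = s + B := by omega
          have e3 : s + 1 + (B + 1) - 1 = s + B + 1 := by omega
          rw [e1, e2, e3, (by omega : s + 1 + k + 1 = s + k + 2)]
          have p1 : (s + B + 1).choose (s + 1) = (s + B).choose s + (s + B).choose (s + 1) :=
            Nat.choose_succ_succ' (s + B) s
          have p2 : (s + B + 1).choose (s + k + 2) =
              (s + B).choose (s + k + 1) + (s + B).choose (s + k + 2) :=
            Nat.choose_succ_succ' (s + B) (s + k + 1)
          have q1 : (s + B).choose (s + k + 2) ≤ (s + B).choose (s + 1) :=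
            choose_anti (by omega) (by omega)
          have q2 : (s + B).choose (s + k + 1) ≤ (s + B).choose s :=
            choose_anti (by omega) (by omega)
          have q3 : (s + B + 1).choose (s + k + 2) ≤ (s + B + 1).choose (s + 1) :=
            choose_anti (by omega) (by omega)
          omega
        · rw [if_neg hg]
          have hB : B = s + k + 1 := by omega
          subst hB
          rw [ihN (s + 1) (s + k + 1) (by omega) (by omega)]
          have e1 : s + 1 + (s + k + 1) - 1 = 2 * s + k + 1 := by omega
          have e2 : s + 1 + (s + k + 1 + 1) - 1 = 2 * s + k + 2 := by omega
          rw [e1, e2, (by omega : s + 1 + k + 1 = s + k + 2)]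
          have p1 : (2 * s + k + 2).choose (s + 1) =
              (2 * s + k + 1).choose s + (2 * s + k + 1).choose (s + 1) :=
            Nat.choose_succ_succ' (2 * s + k + 1) s
          have p2 : (2 * s + k + 2).choose (s + k + 2) =
              (2 * s + k + 1).choose (s + k + 1) + (2 * s + k + 1).choose (s + k + 2) :=
            Nat.choose_succ_succ' (2 * s + k + 1) (s + k + 1)
          have sym : (2 * s + k + 1).choose s = (2 * s + k + 1).choose (s + k + 1) := by
            rw [← Nat.choose_symm (by omega : s + k + 1 ≤ 2 * s + k + 1)]
            congr 1
            omega
          omega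
  exact fun s B h => main (s + B) s B le_rfl h

theorem stmt4 (n k : ℕ) (hn : 1 ≤ n) (hk : k ≤ n - 1) :
    opLe n k = Nat.choose (2 * n - 1) (n - 1) - chooseInt (2 * n - 1) ((n : ℤ) - k - 2) := by
  have hset : {a : List ℕ | IsOrderedPrefSet n a ∧ flaws n a ≤ k} = TSet k n n := by
    ext a
    simp only [Set.mem_setOf_eq, TSet]
    constructor
    · rintro ⟨h, hf⟩
      exact ⟨h.1.1, h.2, h.1.2, (flaws_le_iff_s4 n k a h).1 hf⟩
    · rintro ⟨hlen, hsort, hb, hidx⟩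
      have h : IsOrderedPrefSet n a := ⟨⟨hlen, hb⟩, hsort⟩
      exact ⟨h, (flaws_le_iff_s4 n k a h).2 hidx⟩
  have hcard : opLe n k = (n + n - 1).choose n - (n + n - 1).choose (n + k + 1) := by
    rw [opLe, hset]
    exact TSet_card k n n (by omega)
  rw [hcard]
  have e1 : n + n - 1 = 2 * n - 1 := by omega
  rw [e1]
  have sym1 : (2 * n - 1).choose n = (2 * n - 1).choose (n - 1) := by
    rw [← Nat.choose_symm (by omega : n ≤ 2 * n - 1)]
    congr 1
    omega
  rw [sym1]
  congr 1
  rcases le_or_gt (k + 2) n with hk2 | hk2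
  · have h0 : (0 : ℤ) ≤ (n : ℤ) - k - 2 := by omega
    rw [chooseInt, if_pos h0]
    have e2 : ((n : ℤ) - k - 2).toNat = n - (k + 2) := by omega
    rw [e2, ← Nat.choose_symm (by omega : n + k + 1 ≤ 2 * n - 1)]
    congr 1
    omega
  · have h0 : ¬ (0 : ℤ) ≤ (n : ℤ) - k - 2 := by omega
    rw [chooseInt, if_neg h0]
    exact Nat.choose_eq_zero_of_lt (by omega)
end

section
/- For integers k ≥ 0 and n ≥ l ≥ k+1, the number op_{n,≥k,≤l}^{k+1} of ordered preference sets (a_1,…,a_n) of length n with at least k flaws, leading term a_1 = k+1, and a_i ≤ l for all i, equals C(n+l−k−2, l−k−1). -/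
lemma firstFree_spec {n p j : ℕ} {occ : Finset ℕ} (h : firstFree n occ p = some j) :
    p ≤ j ∧ j ≤ n ∧ j ∉ occ := by
  unfold firstFree at h
  have h1 := List.find?_some h
  have h2 := List.mem_of_find?_eq_some h
  rw [List.mem_range'_1] at h2
  simp only [decide_eq_true_eq] at h1
  exact ⟨h2.1, by omega, h1⟩

lemma flawsFrom_lb (n k : ℕ) : ∀ (L : List ℕ) (occ : Finset ℕ),
    (∀ x ∈ L, k + 1 ≤ x) → occ ⊆ Finset.Icc (k+1) n →
    L.length + occ.card ≤ flawsFrom n L occ + (n - k) := by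
  intro L
  induction L with
  | nil =>
      intro occ _ hsub
      have := Finset.card_le_card hsub
      rw [Nat.card_Icc] at this
      simpa [flawsFrom] using by omega
  | cons p rest ih =>
      intro occ hmem hsub
      have hrest : ∀ x ∈ rest, k + 1 ≤ x := fun x hx => hmem x (by simp [hx])
      rw [flawsFrom]
      cases hf : firstFree n occ p with
      | none =>
          have := ih occ hrest hsub
          simp only [List.length_cons]
          omega
      | some j =>
          obtain ⟨hpj, hjn, hjocc⟩ := firstFree_spec hf
          have hp : k + 1 ≤ p := hmem p (by simp)
          have hsub' : insert j occ ⊆ Finset.Icc (k+1) n := by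
            intro x hx
            rcases Finset.mem_insert.mp hx with h | h
            · subst h; exact Finset.mem_Icc.mpr ⟨by omega, hjn⟩
            · exact hsub h
          have := ih (insert j occ) hrest hsub'
          rw [Finset.card_insert_of_notMem hjocc] at this
          simp only [List.length_cons]
          omega

theorem stmt6 (n k l : ℕ) (hl : k + 1 ≤ l) (hn : l ≤ n) :
    opGeLeLead n k l (k + 1) = Nat.choose (n + l - k - 2) (l - k - 1) := by
  classical
  have hn1 : 1 ≤ n := by omega
  have hset : {a : List ℕ | IsOrderedPrefSet n a ∧ k ≤ flaws n a ∧ (∀ x ∈ a, x ≤ l) ∧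
      a.head? = some (k+1)} =
      {a : List ℕ | a.length = n ∧ a.Pairwise (· ≤ ·) ∧ a.head? = some (k+1) ∧
        ∀ x ∈ a, x ∈ Finset.Icc (k+1) l} := by
    ext a
    simp only [Set.mem_setOf_eq, IsOrderedPrefSet, IsPrefSet]
    constructor
    · rintro ⟨⟨⟨hlen, _⟩, hsort⟩, _, hle, hhead⟩
      refine ⟨hlen, hsort, hhead, ?_⟩
      intro x hx
      rw [Finset.mem_Icc]
      refine ⟨?_, hle x hx⟩
      cases a with
      | nil => simp at hhead
      | cons b t =>
        have hb : b = k + 1 := by simpa using hhead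
        rcases List.mem_cons.mp hx with h | h
        · omega
        · have := (List.pairwise_cons.mp hsort).1 x h; omega
    · rintro ⟨hlen, hsort, hhead, hmem⟩
      have hge : ∀ x ∈ a, k + 1 ≤ x := fun x hx => (Finset.mem_Icc.mp (hmem x hx)).1
      refine ⟨⟨⟨hlen, fun x hx => ⟨by have := hge x hx; omega,
        le_trans (Finset.mem_Icc.mp (hmem x hx)).2 hn⟩⟩, hsort⟩, ?_,
        fun x hx => (Finset.mem_Icc.mp (hmem x hx)).2, hhead⟩
      have := flawsFrom_lb n k a ∅ hge (by simp)
      simp only [Finset.card_empty, Nat.add_zero, hlen] at this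
      have : n ≤ flaws n a + (n - k) := this
      omega
  rw [opGeLeLead, hset]
  set α := {x : ℕ // x ∈ Finset.Icc (k+1) l} with hα
  set S := {a : List ℕ | a.length = n ∧ a.Pairwise (· ≤ ·) ∧ a.head? = some (k+1) ∧
        ∀ x ∈ a, x ∈ Finset.Icc (k+1) l} with hS
  have e : S ≃ Sym α (n-1) := by
    refine
      { toFun := fun a => ⟨(a.1.tail.pmap (fun x h => (⟨x, h⟩ : α))
          (fun x hx => a.2.2.2.2 x (List.mem_of_mem_tail hx)) : Multiset α), ?_⟩
        invFun := fun s => ⟨(k+1) :: Multiset.sort (s.1.map Subtype.val) (· ≤ ·), ?_, ?_, ?_, ?_⟩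
        left_inv := ?_
        right_inv := ?_ }
    · simp only [Multiset.coe_card, List.length_pmap, List.length_tail, a.2.1]
    · simp only [List.length_cons, Multiset.length_sort, Multiset.card_map, s.2]
      omega
    · rw [List.pairwise_cons]
      refine ⟨?_, Multiset.pairwise_sort _ _⟩
      intro b hb
      rw [Multiset.mem_sort, Multiset.mem_map] at hb
      obtain ⟨y, _, rfl⟩ := hb
      exact (Finset.mem_Icc.mp y.2).1
    · rfl
    · intro x hx
      rcases List.mem_cons.mp hx with h | h
      · subst h; exact Finset.mem_Icc.mpr ⟨le_refl _, hl⟩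
      · rw [Multiset.mem_sort, Multiset.mem_map] at h
        obtain ⟨y, _, rfl⟩ := h
        exact y.2
    · rintro ⟨a, ha⟩
      apply Subtype.ext
      simp only
      have hmap : ((a.tail.pmap (fun x h => (⟨x, h⟩ : α))
          (fun x hx => ha.2.2.2 x (List.mem_of_mem_tail hx)) : Multiset α)).map Subtype.val
          = (a.tail : Multiset ℕ) := by
        simp [Multiset.map_coe, List.map_pmap]
      rw [hmap]
      have htail_sorted : a.tail.Pairwise (· ≤ ·) := ha.2.1.tail
      have hsort : Multiset.sort (a.tail : Multiset ℕ) (· ≤ ·) = a.tail := by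
        apply List.Perm.eq_of_pairwise' (Multiset.pairwise_sort _ _) htail_sorted
        rw [← Multiset.coe_eq_coe, Multiset.sort_eq]
      rw [hsort]
      cases a with
      | nil => exact absurd ha.2.2.1 (by simp)
      | cons b t =>
        have : b = k + 1 := by simpa using ha.2.2.1
        simp [this]
    · rintro ⟨s, hs⟩
      apply Subtype.ext
      simp only
      apply Multiset.map_injective (Subtype.val_injective (p := fun x => x ∈ Finset.Icc (k+1) l))
      rw [Multiset.map_coe, List.map_pmap]
      simp only [List.pmap_eq_map, List.map_id']
      rw [List.tail_cons, Multiset.sort_eq]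
  have hcard : S.ncard = Fintype.card (Sym α (n-1)) := by
    rw [← Nat.card_coe_set_eq, Nat.card_congr e, Nat.card_eq_fintype_card]
  rw [hcard, Sym.card_sym_eq_choose]
  have hcα : Fintype.card α = l - k := by
    rw [Fintype.card_coe, Nat.card_Icc]; omega
  rw [hcα]
  have h1 : l - k + (n - 1) - 1 = n + l - k - 2 := by omega
  rw [h1]
  have h2 : n - 1 = (n + l - k - 2) - (l - k - 1) := by omega
  rw [h2, Nat.choose_symm (by omega)]
end
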